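/- arXiv:2510.13525 — 9 statements merged into one kernel-verified Lean document; each statement's English description precedes it below -/
import Mathlib

section
/- Let $X$ be a metric space with $0 < \mathcal{H}^p(X) < \infty$, let $0 < \theta < 1$, $0 < k < p$, and $\phi : X \to \mathbb{R}^k$ be Lipschitz. Then for $\mathcal{H}^p$-almost every $x \in X$ and every $r > 0$, there exists $y \in X$ with $y \neq x$, $d(x,y) < r$, and $|\phi(x) - \phi(y)| \leq \theta\, d(x,y)$. -/
open MeasureTheory Metric Set
open scoped NNReal ENNReal

private lemma key_null {X : Type*} [MetricSpace X] [MeasurableSpace X] [BorelSpace X]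
    {p θ : ℝ} {k : ℕ} (hk : 0 < k) (hkp : (k : ℝ) < p) (hθ0 : 0 < θ)
    (φ : X → EuclideanSpace ℝ (Fin k)) (S : Set X)
    (hS : ∀ x ∈ S, ∀ y ∈ S, x ≠ y → θ * dist x y < dist (φ x) (φ y)) :
    μH[p] S = 0 := by
  have p0 : (0 : ℝ) < p := lt_of_le_of_lt (by exact_mod_cast Nat.zero_le k) hkp
  rcases S.eq_empty_or_nonempty with rfl | ⟨x₀, hx₀⟩
  · simp
  -- injectivity of φ on S
  have hinj : ∀ x ∈ S, ∀ y ∈ S, φ x = φ y → x = y := by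
    intro x hx y hy hxy
    by_contra hne
    have := hS x hx y hy hne
    rw [hxy, dist_self] at this
    have : 0 < dist x y := dist_pos.2 hne
    nlinarith [hS x hx y hy hne]
  set θ₀ : ℝ≥0 := θ.toNNReal with hθ₀
  have hθ₀pos : 0 < θ₀ := Real.toNNReal_pos.2 hθ0
  classical
  set g : EuclideanSpace ℝ (Fin k) → X := fun z =>
    if h : ∃ x ∈ S, φ x = z then h.choose else x₀ with hg
  have hgφ : ∀ x ∈ S, g (φ x) = x := by
    intro x hx
    have h : ∃ y ∈ S, φ y = φ x := ⟨x, hx, rfl⟩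
    simp only [hg, dif_pos h]
    exact hinj _ h.choose_spec.1 _ hx h.choose_spec.2
  have hgS : g '' (φ '' S) = S := by
    apply Subset.antisymm
    · rintro _ ⟨_, ⟨x, hx, rfl⟩, rfl⟩
      rw [hgφ x hx]; exact hx
    · intro x hx
      exact ⟨φ x, mem_image_of_mem _ hx, hgφ x hx⟩
  have hlip : LipschitzOnWith θ₀⁻¹ g (φ '' S) := by
    rw [lipschitzOnWith_iff_dist_le_mul]
    rintro _ ⟨x, hx, rfl⟩ _ ⟨y, hy, rfl⟩
    rw [hgφ x hx, hgφ y hy]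
    rcases eq_or_ne x y with rfl | hne
    · simp
    · have h1 : θ * dist x y < dist (φ x) (φ y) := hS x hx y hy hne
      have h2 : ((θ₀⁻¹ : ℝ≥0) : ℝ) = θ⁻¹ := by
        simp [hθ₀, Real.coe_toNNReal _ hθ0.le]
      rw [h2, inv_mul_eq_div, le_div_iff₀ hθ0]
      nlinarith
  -- image measure zero
  have himg : μH[p] (φ '' S) = 0 := by
    have hcast : ((Real.toNNReal p : ℝ≥0) : ℝ) = p := Real.coe_toNNReal _ p0.le
    have hdim : dimH (φ '' S) < (p.toNNReal : ℝ≥0∞) := by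
      refine lt_of_le_of_lt (dimH_mono (subset_univ _)) ?_
      rw [Real.dimH_univ_eq_finrank, finrank_euclideanSpace, Fintype.card_fin]
      have : ((k : ℝ≥0) : ℝ≥0∞) < ((p.toNNReal : ℝ≥0) : ℝ≥0∞) := by
        rw [ENNReal.coe_lt_coe, ← NNReal.coe_lt_coe, hcast]
        exact_mod_cast hkp
      exact_mod_cast this
    have := hausdorffMeasure_of_dimH_lt hdim
    rwa [hcast] at this
  have hle := hlip.hausdorffMeasure_image_le p0.le
  rw [hgS, himg, mul_zero] at hle
  exact le_antisymm hle zero_le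

/-- For a metric space `X` with `0 < H^p(X) < ∞`, `0 < θ < 1`, `0 < k < p` and a
Lipschitz map `φ : X → ℝ^k`, for `H^p`-a.e. `x` and every `r > 0` there is `y ≠ x`
with `d(x,y) < r` and `|φ(x) - φ(y)| ≤ θ d(x,y)`. -/
theorem stmt_0 {X : Type*} [MetricSpace X] [MeasurableSpace X] [BorelSpace X]
    (p θ : ℝ) (k : ℕ) (hk : 0 < k) (hkp : (k : ℝ) < p)
    (hθ0 : 0 < θ) (hθ1 : θ < 1)
    (hX0 : 0 < μH[p] (univ : Set X)) (hX1 : μH[p] (univ : Set X) < ⊤)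
    (φ : X → EuclideanSpace ℝ (Fin k)) (L : ℝ≥0) (hφ : LipschitzWith L φ) :
    ∀ᵐ x ∂(μH[p] : Measure X), ∀ r > (0 : ℝ), ∃ y : X, y ≠ x ∧ dist x y < r ∧
      dist (φ x) (φ y) ≤ θ * dist x y := by
  -- existence of covers of small diameter
  have hcover : ∀ δ : ℝ≥0∞, 0 < δ → ∃ t : ℕ → Set X,
      (univ : Set X) ⊆ ⋃ n, t n ∧ ∀ n, EMetric.diam (t n) ≤ δ := by
    intro δ hδ
    by_contra h
    push_neg at h
    have : (⊤ : ℝ≥0∞) ≤ μH[p] (univ : Set X) := by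
      rw [MeasureTheory.Measure.hausdorffMeasure_apply]
      refine le_trans ?_ (le_iSup₂ (f := fun (r : ℝ≥0∞) (_ : 0 < r) =>
        ⨅ (t : ℕ → Set X) (_ : (univ : Set X) ⊆ ⋃ n, t n)
          (_ : ∀ n, EMetric.diam (t n) ≤ r),
          ∑' n, ⨆ _ : (t n).Nonempty, EMetric.diam (t n) ^ p) δ hδ)
      refine le_iInf fun t => le_iInf fun hc => le_iInf fun hd => ?_
      rcases h t hc with ⟨n, hn⟩
      exact absurd (hd n) (not_le.2 hn)
    exact absurd hX1 (by simpa using this.not_gt)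
  -- bad sets
  set Bad : ℕ → Set X := fun n => {x : X | ∀ y : X, y ≠ x → dist x y < 1 / (n + 1) →
    θ * dist x y < dist (φ x) (φ y)} with hBad
  have hBadNull : ∀ n, μH[p] (Bad n) = 0 := by
    intro n
    have hpos : (0 : ℝ) < 1 / (2 * (n + 1)) := by positivity
    obtain ⟨t, hc, hd⟩ := hcover (ENNReal.ofReal (1 / (2 * (n + 1)))) (ENNReal.ofReal_pos.2 hpos)
    have hsub : Bad n ⊆ ⋃ m, Bad n ∩ t m := by
      intro x hx
      rcases mem_iUnion.1 (hc (mem_univ x)) with ⟨m, hm⟩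
      exact mem_iUnion.2 ⟨m, hx, hm⟩
    refine measure_mono_null hsub (measure_iUnion_null fun m => ?_)
    refine key_null hk hkp hθ0 φ _ ?_
    rintro x ⟨hx, hx'⟩ y ⟨hy, hy'⟩ hne
    have hxy : dist x y ≤ 1 / (2 * (n + 1)) := by
      rw [← edist_le_ofReal hpos.le]
      exact le_trans (EMetric.edist_le_diam_of_mem hx' hy') (hd m)
    have hxy' : dist x y < 1 / (n + 1) := by
      have : (1 : ℝ) / (2 * (n + 1)) < 1 / (n + 1) := by
        rw [div_lt_div_iff₀ (by positivity) (by positivity)]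
        nlinarith [Nat.cast_nonneg (α := ℝ) n]
      linarith
    exact hx y (Ne.symm hne) (by rwa [dist_comm] at hxy' ⊢)
  rw [ae_iff]
  refine measure_mono_null (fun x hx => ?_) (measure_iUnion_null hBadNull)
  simp only [mem_setOf_eq, not_forall, not_exists, not_and, not_le] at hx
  obtain ⟨r, hr, hbad⟩ := hx
  obtain ⟨n, hn⟩ := exists_nat_one_div_lt hr
  refine mem_iUnion.2 ⟨n, fun y hy hdy => ?_⟩
  exact hbad y hy (lt_trans hdy hn)
end

section
/- Let $C_1, \dots, C_n \subseteq \mathbb{R}^n$ be closed cones that are linearly independent, meaning that any choice of nonzero vectors $v_i \in C_i$ yields a linearly independent family. Then there is a constant $M > 0$ such that for every $\delta > 0$ and every $n \times n$ matrix $A$ whose $i$-th column $a_i$ lies in $C_i$ with $|a_i| \geq \delta$, the matrix $A$ is invertible and $\|A^{-1}\|_{op} \leq M \delta^{-1}$. -/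
open Metric Set
open scoped NNReal ENNReal

set_option maxHeartbeats 1000000

/-- Matrix-inverse bound for linearly independent closed cones: there is `M > 0` so
that any matrix whose `i`-th column lies in `Cᵢ` with norm at least `δ` is invertible
with operator norm of the inverse at most `M/δ`. -/
theorem stmt_3 (n : ℕ) (hn : 0 < n)
    (C : Fin n → Set (EuclideanSpace ℝ (Fin n)))
    (hclosed : ∀ i, IsClosed (C i))
    (hcone : ∀ i, ∀ r : ℝ, 0 ≤ r → ∀ v ∈ C i, r • v ∈ C i)
    (hindep : ∀ v : Fin n → EuclideanSpace ℝ (Fin n),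
      (∀ i, v i ∈ C i) → (∀ i, v i ≠ 0) → LinearIndependent ℝ v) :
    ∃ M : ℝ, 0 < M ∧ ∀ δ : ℝ, 0 < δ →
      ∀ a : Fin n → EuclideanSpace ℝ (Fin n),
        (∀ i, a i ∈ C i) → (∀ i, δ ≤ ‖a i‖) →
      ∀ A : Matrix (Fin n) (Fin n) ℝ, (∀ i j, A i j = a j i) →
        IsUnit A ∧
        ‖LinearMap.toContinuousLinearMap (Matrix.toEuclideanLin A⁻¹)‖ ≤ M / δ := by
  classical
  -- coordinate formula for sums in `E`
  have sumcoord : ∀ (w : Fin n → EuclideanSpace ℝ (Fin n)) (c : Fin n → ℝ) (j : Fin n),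
      (∑ i, c i • w i) j = ∑ i, c i * w i j := by
    intro w c j
    induction (Finset.univ : Finset (Fin n)) using Finset.induction with
    | empty => rfl
    | @insert i s h ih =>
      rw [Finset.sum_insert h, Finset.sum_insert h, ← ih]
      rfl
  by_cases hex : ∀ i, ∃ u, u ∈ C i ∧ ‖u‖ = 1
  · -- main case: each cone contains a unit vector
    -- the compact set of tuples of unit vectors in the cones, paired with unit vectors
    set K : Set ((Fin n → EuclideanSpace ℝ (Fin n)) × EuclideanSpace ℝ (Fin n)) :=
      (Set.pi Set.univ fun i => C i ∩ sphere (0:EuclideanSpace ℝ (Fin n)) 1) ×ˢ sphere (0:EuclideanSpace ℝ (Fin n)) 1 with hK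
    have hKc : IsCompact K :=
      (isCompact_univ_pi fun i => ((isCompact_sphere 0 1).inter_left (hclosed i))).prod
        (isCompact_sphere 0 1)
    have hKne : K.Nonempty := by
      choose u hu using hex
      refine ⟨(u, EuclideanSpace.single (⟨0, hn⟩ : Fin n) (1:ℝ)), ?_, ?_⟩
      · intro i _
        exact ⟨(hu i).1, by simpa [mem_sphere_iff_norm] using (hu i).2⟩
      · simp [mem_sphere_iff_norm, EuclideanSpace.norm_single, norm_one]
    have hfc : Continuous (fun p : (Fin n → EuclideanSpace ℝ (Fin n)) × EuclideanSpace ℝ (Fin n) => ‖∑ i, p.2 i • p.1 i‖) := by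
      refine continuous_norm.comp (continuous_finset_sum _ fun i _ => ?_)
      exact (((continuous_apply i).comp (PiLp.continuous_ofLp _ _)).comp continuous_snd).smul
        ((continuous_apply i).comp continuous_fst)
    obtain ⟨p0, hp0K, hp0min⟩ := hKc.exists_isMinOn hKne hfc.continuousOn
    have hmin : ∀ q ∈ K, ‖∑ i, p0.2 i • p0.1 i‖ ≤ ‖∑ i, q.2 i • q.1 i‖ := fun q hq => hp0min hq
    set c : ℝ := ‖∑ i, p0.2 i • p0.1 i‖ with hc
    have hp01 : ∀ i, p0.1 i ∈ C i ∧ ‖p0.1 i‖ = 1 := by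
      intro i
      have := hp0K.1 i (Set.mem_univ i)
      exact ⟨this.1, by simpa [mem_sphere_iff_norm] using this.2⟩
    have hp02 : ‖p0.2‖ = 1 := by simpa [mem_sphere_iff_norm] using hp0K.2
    have hcpos : 0 < c := by
      rcases (norm_nonneg (∑ i, p0.2 i • p0.1 i)).lt_or_eq with h | h
      · exact h
      exfalso
      have hsum : ∑ i, p0.2 i • p0.1 i = 0 := norm_eq_zero.mp h.symm
      have hli := hindep p0.1 (fun i => (hp01 i).1)
        (fun i => fun h0 => by simpa [h0] using (hp01 i).2)
      have hzero : ∀ i, p0.2 i = 0 :=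
        Fintype.linearIndependent_iff.mp hli p0.2 hsum
      have : p0.2 = 0 := by
        ext i; exact hzero i
      rw [this, norm_zero] at hp02
      exact one_ne_zero hp02.symm
    -- the key uniform lower bound
    have key : ∀ (δ : ℝ), 0 < δ → ∀ (a : Fin n → EuclideanSpace ℝ (Fin n)), (∀ i, a i ∈ C i) →
        (∀ i, δ ≤ ‖a i‖) → ∀ x : EuclideanSpace ℝ (Fin n), c * (δ * ‖x‖) ≤ ‖∑ i, x i • a i‖ := by
      intro δ hδ a ha hna x
      have hapos : ∀ i, (0:ℝ) < ‖a i‖ := fun i => lt_of_lt_of_le hδ (hna i)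
      set u : Fin n → EuclideanSpace ℝ (Fin n) := fun i => ‖a i‖⁻¹ • a i with hu
      have huC : ∀ i, u i ∈ C i := fun i =>
        hcone i _ (inv_nonneg.mpr (hapos i).le) _ (ha i)
      have hu1 : ∀ i, ‖u i‖ = 1 := by
        intro i
        rw [hu, norm_smul, norm_inv, norm_norm, inv_mul_cancel₀ (hapos i).ne']
      set y : EuclideanSpace ℝ (Fin n) := (WithLp.equiv 2 (Fin n → ℝ)).symm (fun i => ‖a i‖ * x i) with hy
      have hyi : ∀ i, y i = ‖a i‖ * x i := fun i => rfl
      have hsum : ∑ i, x i • a i = ∑ i, y i • u i := by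
        refine Finset.sum_congr rfl fun i _ => ?_
        have hne := (hapos i).ne'
        rw [hyi]
        show x i • a i = (‖a i‖ * x i) • ‖a i‖⁻¹ • a i
        rw [smul_smul]
        congr 1
        field_simp
      have hyx : δ * ‖x‖ ≤ ‖y‖ := by
        rw [EuclideanSpace.norm_eq, EuclideanSpace.norm_eq]
        have h1 : δ * Real.sqrt (∑ i, ‖x i‖ ^ 2) =
            Real.sqrt (∑ i, δ ^ 2 * ‖x i‖ ^ 2) := by
          rw [← Finset.mul_sum, Real.sqrt_mul (sq_nonneg δ), Real.sqrt_sq hδ.le]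
        rw [h1]
        refine Real.sqrt_le_sqrt (Finset.sum_le_sum fun i _ => ?_)
        rw [hyi, norm_mul, mul_pow, Real.norm_eq_abs (‖a i‖), abs_of_nonneg (norm_nonneg _)]
        gcongr
        exact hna i
      have hcy : c * ‖y‖ ≤ ‖∑ i, y i • u i‖ := by
        rcases eq_or_ne y 0 with hy0 | hy0
        · simp [hy0]
        · have hynorm : 0 < ‖y‖ := norm_pos_iff.mpr hy0
          have hmem : ((u, ‖y‖⁻¹ • y) : (Fin n → EuclideanSpace ℝ (Fin n)) × EuclideanSpace ℝ (Fin n)) ∈ K := by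
            constructor
            · intro i _
              exact ⟨huC i, by simpa [mem_sphere_iff_norm] using hu1 i⟩
            · simp only [mem_sphere_iff_norm, sub_zero, norm_smul, norm_inv, norm_norm]
              exact inv_mul_cancel₀ hynorm.ne'
          have hle : c ≤ ‖∑ i, (‖y‖⁻¹ • y) i • u i‖ := hmin (u, ‖y‖⁻¹ • y) hmem
          have heq : ∑ i, (‖y‖⁻¹ • y) i • u i = ‖y‖⁻¹ • ∑ i, y i • u i := by
            rw [Finset.smul_sum]
            exact Finset.sum_congr rfl fun i _ => by
              rw [PiLp.smul_apply, smul_eq_mul, ← smul_smul]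
          rw [heq, norm_smul, norm_inv, norm_norm] at hle
          calc c * ‖y‖ ≤ (‖y‖⁻¹ * ‖∑ i, y i • u i‖) * ‖y‖ := by gcongr
            _ = ‖∑ i, y i • u i‖ := by field_simp
      calc c * (δ * ‖x‖) ≤ c * ‖y‖ := by gcongr
        _ ≤ ‖∑ i, y i • u i‖ := hcy
        _ = ‖∑ i, x i • a i‖ := by rw [hsum]
    refine ⟨c⁻¹, inv_pos.mpr hcpos, ?_⟩
    intro δ hδ a ha hna A hA
    have hLapp : ∀ x : EuclideanSpace ℝ (Fin n), Matrix.toEuclideanLin A x = ∑ i, x i • a i := by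
      intro x
      ext j
      simp [Matrix.toEuclideanLin_apply, Matrix.mulVec, dotProduct, hA,
        sumcoord, mul_comm]
    have hlow : ∀ x : EuclideanSpace ℝ (Fin n), c * δ * ‖x‖ ≤ ‖Matrix.toEuclideanLin A x‖ := by
      intro x
      rw [hLapp, mul_assoc]
      exact key δ hδ a ha hna x
    have hcδ : 0 < c * δ := mul_pos hcpos hδ
    have hinj : Function.Injective (Matrix.toEuclideanLin A) := by
      intro x z hxz
      have : Matrix.toEuclideanLin A (x - z) = 0 := by
        rw [map_sub, hxz, sub_self]
      have h0 := hlow (x - z)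
      rw [this, norm_zero] at h0
      have hxz0 : x - z = 0 := by
        by_contra hne
        have : 0 < c * δ * ‖x - z‖ := mul_pos hcδ (norm_pos_iff.mpr hne)
        linarith
      exact sub_eq_zero.mp hxz0
    have hmvinj : Function.Injective A.mulVec := by
      intro x z hxz
      have : Matrix.toEuclideanLin A ((WithLp.equiv 2 (Fin n → ℝ)).symm x) =
          Matrix.toEuclideanLin A ((WithLp.equiv 2 (Fin n → ℝ)).symm z) := by
        rw [WithLp.equiv_symm_apply, Matrix.toEuclideanLin_apply_piLp_toLp,
          Matrix.toEuclideanLin_apply_piLp_toLp, hxz]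
      exact (WithLp.equiv 2 (Fin n → ℝ)).symm.injective (hinj this)
    have hunit : IsUnit A := Matrix.mulVec_injective_iff_isUnit.mp hmvinj
    refine ⟨hunit, ?_⟩
    have hsurj : Function.Surjective (Matrix.toEuclideanLin A) :=
      (LinearMap.injective_iff_surjective).mp hinj
    have hinvA : A⁻¹ * A = 1 := Matrix.nonsing_inv_mul A (Matrix.isUnit_iff_isUnit_det A |>.mp hunit)
    have hcomp : ∀ x : EuclideanSpace ℝ (Fin n), Matrix.toEuclideanLin A⁻¹ (Matrix.toEuclideanLin A x) = x := by
      intro x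
      have : Matrix.toEuclideanLin (A⁻¹ * A) = Matrix.toEuclideanLin (1 : Matrix (Fin n) (Fin n) ℝ) := by
        rw [hinvA]
      rw [Matrix.toEuclideanLin_eq_toLin] at this
      have h2 := congrArg (fun f => f x) (this)
      simp only [Matrix.toLin_mul _ (PiLp.basisFun 2 ℝ (Fin n)) _, LinearMap.comp_apply,
        Matrix.toLin_one, LinearMap.id_apply] at h2
      rw [Matrix.toEuclideanLin_eq_toLin]
      exact h2
    refine ContinuousLinearMap.opNorm_le_bound _ (by positivity) fun w => ?_
    obtain ⟨x, hx⟩ := hsurj w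
    have hxw : (LinearMap.toContinuousLinearMap (Matrix.toEuclideanLin A⁻¹)) w = x := by
      simp only [LinearMap.coe_toContinuousLinearMap']
      rw [← hx, hcomp]
    rw [hxw]
    have := hlow x
    rw [hx] at this
    rw [div_mul_eq_mul_div, le_div_iff₀ hδ]
    calc ‖x‖ * δ = (c * δ * ‖x‖) * c⁻¹ := by field_simp
      _ ≤ ‖w‖ * c⁻¹ := by gcongr
      _ = c⁻¹ * ‖w‖ := mul_comm _ _
  · -- degenerate case: some cone contains no unit vector, hypothesis is vacuous
    refine ⟨1, one_pos, fun δ hδ a ha hna A hA => absurd ?_ hex⟩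
    intro i
    have h1 : (0:ℝ) < ‖a i‖ := lt_of_lt_of_le hδ (hna i)
    refine ⟨‖a i‖⁻¹ • a i, hcone i _ (inv_nonneg.mpr h1.le) _ (ha i), ?_⟩
    rw [norm_smul, norm_inv, norm_norm, inv_mul_cancel₀ h1.ne']
end

section
/- Let $C_1, \dots, C_n \subseteq \mathbb{R}^n$ be linearly independent closed cones with axes avoiding the ball $B(0,\delta 2^{-k})$, and define $\hat{C}_j = (C_j \setminus B(0,\delta 2^{-k})) \times [-1,1] \subseteq \mathbb{R}^{n+1}$ for $1 \le j \le n$, and $\hat{C}_{n+1} = B(0, \kappa 2^{-k}) \times ([-1,-1/2] \cup [1/2,1])$. If $\kappa < \delta/(4Mn)$, where $M$ is the constant of the matrix-inverse bound for $C_1,\dots,C_n$, then any choice of vectors $v_j \in \hat{C}_j$, $1 \le j \le n+1$, is linearly independent in $\mathbb{R}^{n+1}$. -/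
open Metric Set
open scoped NNReal ENNReal

lemma coord_abs_le_norm {n : ℕ} (x : EuclideanSpace ℝ (Fin n)) (i : Fin n) : |x i| ≤ ‖x‖ := by
  rw [EuclideanSpace.norm_eq, ← Real.sqrt_sq_eq_abs]
  apply Real.sqrt_le_sqrt
  calc (x i)^2 = ‖x i‖^2 := by rw [Real.norm_eq_abs, sq_abs]
    _ ≤ ∑ j, ‖x j‖^2 := Finset.single_le_sum (f := fun j => ‖x j‖^2)
        (fun j _ => sq_nonneg _) (Finset.mem_univ i)

lemma arith_aux (x f : ℝ) (hx : 0 ≤ x) (h1 : x/2 ≤ x*f) (h2 : f < 1/4) : x = 0 := by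
  nlinarith

set_option maxHeartbeats 1000000 in
/-- Lifting linearly independent cones: given linearly independent closed cones
`C₁,…,Cₙ ⊆ ℝⁿ` with matrix-inverse constant `M`, the sets
`Ĉⱼ = (Cⱼ \ B(0, δ2^{-k})) × [-1,1]` and
`Ĉ_{n+1} = B(0, κ2^{-k}) × ([-1,-1/2] ∪ [1/2,1])` in `ℝⁿ × ℝ` are such that any
choice of vectors `vⱼ ∈ Ĉⱼ` is linearly independent, provided `κ < δ/(4Mn)`. -/
theorem stmt_4 (n : ℕ) (hn : 0 < n) (k : ℕ) (δ κ M : ℝ)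
    (hδ : 0 < δ) (hκ : 0 < κ) (hM : 0 < M)
    (C : Fin n → Set (EuclideanSpace ℝ (Fin n)))
    (hclosed : ∀ i, IsClosed (C i))
    (hcone : ∀ i, ∀ r : ℝ, 0 ≤ r → ∀ v ∈ C i, r • v ∈ C i)
    (hindep : ∀ v : Fin n → EuclideanSpace ℝ (Fin n),
      (∀ i, v i ∈ C i) → (∀ i, v i ≠ 0) → LinearIndependent ℝ v)
    (hMprop : ∀ δ' : ℝ, 0 < δ' →
      ∀ a : Fin n → EuclideanSpace ℝ (Fin n),
        (∀ i, a i ∈ C i) → (∀ i, δ' ≤ ‖a i‖) →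
      ∀ A : Matrix (Fin n) (Fin n) ℝ, (∀ i j, A i j = a j i) →
        IsUnit A ∧
        ‖LinearMap.toContinuousLinearMap (Matrix.toEuclideanLin A⁻¹)‖ ≤ M / δ')
    (hκδ : κ < δ / (4 * M * n))
    (v : Fin (n + 1) → EuclideanSpace ℝ (Fin n) × ℝ)
    (hv : ∀ j : Fin n, (v j.castSucc).1 ∈ C j ∧
      δ * (2 : ℝ) ^ (-(k : ℤ)) ≤ ‖(v j.castSucc).1‖ ∧
      (v j.castSucc).2 ∈ Icc (-1 : ℝ) 1)
    (hvlast : ‖(v (Fin.last n)).1‖ < κ * (2 : ℝ) ^ (-(k : ℤ)) ∧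
      ((v (Fin.last n)).2 ∈ Icc (-1 : ℝ) (-(1/2)) ∪ Icc (1/2 : ℝ) 1)) :
    LinearIndependent ℝ v := by
  have ht : (0:ℝ) < (2 : ℝ) ^ (-(k : ℤ)) := by positivity
  set t : ℝ := (2 : ℝ) ^ (-(k : ℤ)) with htdef
  set δ' : ℝ := δ * t with hδ'def
  have hδ'pos : 0 < δ' := by positivity
  set a : Fin n → EuclideanSpace ℝ (Fin n) := fun j => (v j.castSucc).1 with hadef
  set A : Matrix (Fin n) (Fin n) ℝ := Matrix.of fun i j => a j i with hAdef
  obtain ⟨hAunit, hnorm⟩ := hMprop δ' hδ'pos a (fun j => (hv j).1) (fun j => (hv j).2.1)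
    A (fun i j => rfl)
  rw [Fintype.linearIndependent_iff]
  intro g hg
  have h1 : ∑ i, g i • (v i).1 = 0 := by
    have := congrArg Prod.fst hg
    simpa [Prod.fst_sum] using this
  have h2 : ∑ i, g i • (v i).2 = 0 := by
    have := congrArg Prod.snd hg
    simpa [Prod.snd_sum] using this
  rw [Fin.sum_univ_castSucc] at h1 h2
  set gl := g (Fin.last n) with hgl
  set aN := (v (Fin.last n)).1 with haN
  set bN := (v (Fin.last n)).2 with hbN
  set gc : EuclideanSpace ℝ (Fin n) := (WithLp.equiv 2 (Fin n → ℝ)).symm (fun j => g j.castSucc)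
    with hgc
  have hsum : ∑ j : Fin n, g j.castSucc • a j = -(gl • aN) := by
    rw [eq_neg_iff_add_eq_zero]; exact h1
  have hmul : Matrix.toEuclideanLin A gc = -(gl • aN) := by
    rw [← hsum]
    apply (WithLp.linearEquiv 2 ℝ (Fin n → ℝ)).injective
    rw [map_sum]
    funext i
    simp only [WithLp.coe_linearEquiv, Matrix.piLp_ofLp_toEuclideanLin, Finset.sum_apply]
    simp only [hgc, WithLp.equiv_symm_apply, WithLp.ofLp_toLp, Matrix.toLin'_apply, Matrix.mulVec, dotProduct, WithLp.ofLp_smul,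
      hAdef, Matrix.of_apply, Pi.smul_apply, smul_eq_mul]
    exact Finset.sum_congr rfl fun j _ => mul_comm _ _
  have hdet : IsUnit A.det := (Matrix.isUnit_iff_isUnit_det A).mp hAunit
  have hginv : gc = Matrix.toEuclideanLin A⁻¹ (-(gl • aN)) := by
    rw [← hmul]
    have : Matrix.toEuclideanLin A⁻¹ ∘ₗ Matrix.toEuclideanLin A
        = Matrix.toEuclideanLin (A⁻¹ * A) := by
      rw [Matrix.toEuclideanLin_eq_toLin, ← Matrix.toLin_mul]
    have h1' := LinearMap.congr_fun this gc
    simp only [LinearMap.comp_apply] at h1'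
    rw [h1', Matrix.nonsing_inv_mul A hdet, Matrix.toEuclideanLin_eq_toLin, Matrix.toLin_one,
      LinearMap.id_apply]
  have hgcnorm : ‖gc‖ ≤ (M / δ') * (|gl| * ‖aN‖) := by
    rw [hginv]
    calc ‖Matrix.toEuclideanLin A⁻¹ (-(gl • aN))‖
        = ‖LinearMap.toContinuousLinearMap (Matrix.toEuclideanLin A⁻¹) (-(gl • aN))‖ := rfl
      _ ≤ ‖LinearMap.toContinuousLinearMap (Matrix.toEuclideanLin A⁻¹)‖ * ‖-(gl • aN)‖ :=
          ContinuousLinearMap.le_opNorm _ _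
      _ ≤ (M / δ') * (|gl| * ‖aN‖) := by
          rw [norm_neg, norm_smul, Real.norm_eq_abs]
          exact mul_le_mul_of_nonneg_right hnorm (by positivity)
  -- bound each coefficient
  have hcoef : ∀ j : Fin n, |g j.castSucc| ≤ ‖gc‖ := fun j => coord_abs_le_norm gc j
  -- second coordinate estimate
  have hbN2 : 1/2 ≤ |bN| := by
    rcases hvlast.2 with h | h
    · rw [abs_of_nonpos (le_trans h.2 (by norm_num))]; linarith [h.2]
    · rw [abs_of_nonneg (le_trans (by norm_num) h.1)]; exact h.1
  have hglbN : |gl| * |bN| ≤ n * ‖gc‖ := by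
    have : gl * bN = -(∑ j : Fin n, g j.castSucc • (v j.castSucc).2) := by
      rw [eq_neg_iff_add_eq_zero, add_comm]
      simpa using h2
    calc |gl| * |bN| = |gl * bN| := (abs_mul _ _).symm
      _ = |∑ j : Fin n, g j.castSucc • (v j.castSucc).2| := by rw [this, abs_neg]
      _ ≤ ∑ j : Fin n, |g j.castSucc • (v j.castSucc).2| := Finset.abs_sum_le_sum_abs _ _
      _ ≤ ∑ j : Fin n, ‖gc‖ := by
          apply Finset.sum_le_sum
          intro j _
          rw [smul_eq_mul, abs_mul]
          have hb : |(v j.castSucc).2| ≤ 1 := abs_le.mpr ⟨(hv j).2.2.1, (hv j).2.2.2⟩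
          calc |g j.castSucc| * |(v j.castSucc).2| ≤ |g j.castSucc| * 1 :=
                mul_le_mul_of_nonneg_left hb (abs_nonneg _)
            _ ≤ ‖gc‖ := by rw [mul_one]; exact hcoef j
      _ = n * ‖gc‖ := by rw [Finset.sum_const, Finset.card_univ, Fintype.card_fin, nsmul_eq_mul]
  have haNle : ‖aN‖ ≤ κ * t := le_of_lt hvlast.1
  have key : |gl| / 2 ≤ |gl| * (n * M * κ / δ) := by
    calc |gl| / 2 = (1/2) * |gl| := by ring
      _ ≤ |bN| * |gl| := mul_le_mul_of_nonneg_right hbN2 (abs_nonneg _)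
      _ = |gl| * |bN| := mul_comm _ _
      _ ≤ n * ‖gc‖ := hglbN
      _ ≤ n * ((M / δ') * (|gl| * ‖aN‖)) :=
          mul_le_mul_of_nonneg_left hgcnorm (by positivity)
      _ ≤ n * ((M / δ') * (|gl| * (κ * t))) := by
          apply mul_le_mul_of_nonneg_left _ (by positivity)
          apply mul_le_mul_of_nonneg_left _ (by positivity)
          exact mul_le_mul_of_nonneg_left haNle (abs_nonneg _)
      _ = |gl| * (n * M * κ / δ) := by
          rw [hδ'def]; field_simp
  have hfrac : n * M * κ / δ < 1/4 := by
    have h4 : (0:ℝ) < 4 * M * n := by positivity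
    have hh := (lt_div_iff₀ h4).mp hκδ
    rw [div_lt_div_iff₀ hδ (by norm_num)]
    nlinarith [hh]
  have hgl0 : gl = 0 :=
    abs_eq_zero.mp (arith_aux _ _ (abs_nonneg gl) key hfrac)
  have hgc0 : gc = 0 := by
    rw [hginv, hgl0, zero_smul, neg_zero, map_zero]
  intro i
  refine Fin.lastCases ?_ ?_ i
  · exact hgl0
  · intro j
    have := congrFun (congrArg (WithLp.equiv 2 (Fin n → ℝ)) hgc0) j
    simpa [hgc] using this
end

section
/- Let $Y$ be a Banach space and $\{\xi_i\}_{i \in \mathbb{N}} \subseteq \overline{B_{Y^*}}$ a countable norming family, i.e. $\|x\| = \sup_i \xi_i(x)$ for all $x \in Y$. Let $\epsilon > 0$ and $\gamma : D \to Y$ be Lipschitz on a Borel set $D \subseteq \mathbb{R}$. Then there is a Borel decomposition $D = N \cup E_1 \cup E_2 \cup \cdots$ with $\mathcal{L}^1(N) = 0$ such that for each $i$ and almost every $t \in E_i$, the derivative $(\xi_i \circ \gamma)'(t)$ exists and satisfies $(\xi_i \circ \gamma)'(t) \geq (1-\epsilon)\,\mathrm{Lip}(\gamma,t)$. -/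
open MeasureTheory Metric Set Filter
open scoped NNReal ENNReal Topology

/-- The pointwise Lipschitz constant of `f` at `t` relative to the set `D`. -/
noncomputable def lipWithinAt {Y : Type*} [PseudoMetricSpace Y]
    (f : ℝ → Y) (D : Set ℝ) (t : ℝ) : ℝ :=
  Filter.limsup (fun s => dist (f s) (f t) / dist s t) (nhdsWithin t (D \ {t}))

lemma abs_deriv_le_of_lip {L : ℝ≥0} {G : ℝ → ℝ} (hG : LipschitzWith L G) (t : ℝ) :
    |deriv G t| ≤ L := by
  by_cases h : DifferentiableAt ℝ G t
  · have hd := h.hasDerivAt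
    rw [hasDerivAt_iff_tendsto_slope] at hd
    refine le_of_tendsto hd.abs ?_
    filter_upwards [self_mem_nhdsWithin] with s hs
    have hst : s - t ≠ 0 := sub_ne_zero.2 hs
    rw [slope_def_field, div_eq_mul_inv, abs_mul, abs_inv]
    rw [← div_eq_mul_inv, div_le_iff₀ (abs_pos.2 hst)]
    have := hG.dist_le_mul s t
    rw [Real.dist_eq, Real.dist_eq] at this
    simpa [abs_sub_comm] using this
  · simp [deriv_zero_of_not_differentiableAt h, NNReal.coe_nonneg]


lemma tendsto_slope_seq {G : ℝ → ℝ} {u d : ℝ} (hd : HasDerivAt G d u) :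
    Tendsto (fun n : ℕ => (G (u + ((n : ℝ) + 1)⁻¹) - G u) / ((n : ℝ) + 1)⁻¹) atTop (𝓝 d) := by
  rw [hasDerivAt_iff_tendsto_slope] at hd
  have hpos : ∀ n : ℕ, (0:ℝ) < ((n : ℝ) + 1)⁻¹ := fun n => by positivity
  have hlim : Tendsto (fun n : ℕ => ((n : ℝ) + 1)⁻¹) atTop (𝓝 0) :=
    tendsto_one_div_add_atTop_nhds_zero_nat.congr (fun n => by rw [one_div])
  have hz : Tendsto (fun n : ℕ => u + ((n : ℝ) + 1)⁻¹) atTop (𝓝[≠] u) := by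
    apply tendsto_nhdsWithin_of_tendsto_nhds_of_eventually_within
    · simpa using (tendsto_const_nhds.add hlim)
    · exact Eventually.of_forall fun n => by
        have := hpos n
        simp only [mem_compl_iff, mem_singleton_iff]
        intro h; nlinarith
  refine (hd.comp hz).congr fun n => ?_
  rw [Function.comp_apply, slope_def_field]
  congr 1
  ring

lemma lip_ftc {L : ℝ≥0} {G : ℝ → ℝ} (hG : LipschitzWith L G) (a b : ℝ) :
    G b - G a = ∫ u in a..b, deriv G u := by
  have hGc : Continuous G := hG.continuous
  have hint : ∀ x y : ℝ, IntervalIntegrable G volume x y := fun x y =>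
    hGc.intervalIntegrable x y
  set Φ : ℝ → ℝ := fun x => ∫ u in (0:ℝ)..x, G u with hΦdef
  have hΦd : ∀ x : ℝ, HasDerivAt Φ (G x) x := fun x =>
    intervalIntegral.integral_hasDerivAt_right (hint 0 x)
      (hGc.stronglyMeasurable.stronglyMeasurableAtFilter) hGc.continuousAt
  set h : ℕ → ℝ := fun n => ((n : ℝ) + 1)⁻¹ with hhdef
  have hpos : ∀ n, (0:ℝ) < h n := fun n => by positivity
  set F : ℕ → ℝ → ℝ := fun n u => (G (u + h n) - G u) / h n with hFdef
  -- DCT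
  have hDCT : Tendsto (fun n => ∫ u in a..b, F n u) atTop (𝓝 (∫ u in a..b, deriv G u)) := by
    apply intervalIntegral.tendsto_integral_filter_of_dominated_convergence
      (bound := fun _ => (L : ℝ))
    · exact Eventually.of_forall fun n =>
        (((hGc.comp (continuous_id.add continuous_const)).sub hGc).div_const _).aestronglyMeasurable
    · refine Eventually.of_forall fun n => Eventually.of_forall fun x _ => ?_
      have hb := hG.dist_le_mul (x + h n) x
      rw [Real.dist_eq, Real.dist_eq] at hb
      rw [Real.norm_eq_abs, abs_div, div_le_iff₀ (abs_pos.2 (ne_of_gt (hpos n)))]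
      calc |G (x + h n) - G x| ≤ L * |x + h n - x| := hb
        _ = L * |h n| := by ring_nf
    · exact intervalIntegrable_const
    · filter_upwards [hG.ae_differentiableAt_of_real] with x hx _
      exact tendsto_slope_seq hx.hasDerivAt
  -- other representation of the integrals
  have hrepr : ∀ n, ∫ u in a..b, F n u
      = ((Φ (b + h n) - Φ b) - (Φ (a + h n) - Φ a)) / h n := by
    intro n
    have hc' : Continuous (fun u : ℝ => G (u + h n)) := by
      exact hGc.comp (continuous_id.add continuous_const)
    have h1 : ∫ u in a..b, F n u = ((∫ u in a..b, G (u + h n)) - ∫ u in a..b, G u) / h n := by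
      rw [← intervalIntegral.integral_sub (hc'.intervalIntegrable a b) (hint a b),
        ← intervalIntegral.integral_div]
    have h2 : ∫ u in a..b, G (u + h n) = ∫ u in (a + h n)..(b + h n), G u :=
      intervalIntegral.integral_comp_add_right G (h n)
    have h3 : ∫ u in (a + h n)..(b + h n), G u = Φ (b + h n) - Φ (a + h n) :=
      (intervalIntegral.integral_interval_sub_left (hint 0 (b + h n)) (hint 0 (a + h n))).symm
    have h4 : ∫ u in a..b, G u = Φ b - Φ a :=
      (intervalIntegral.integral_interval_sub_left (hint 0 b) (hint 0 a)).symm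
    rw [h1, h2, h3, h4]
    ring
  have hlim2 : Tendsto (fun n => ∫ u in a..b, F n u) atTop (𝓝 (G b - G a)) := by
    have hb' := tendsto_slope_seq (hΦd b)
    have ha' := tendsto_slope_seq (hΦd a)
    have := hb'.sub ha'
    refine this.congr fun n => ?_
    rw [hrepr n]
    ring
  exact tendsto_nhds_unique hlim2 hDCT

/-- Decomposition of the domain of a Banach-valued Lipschitz curve: off a Lebesgue
null set, for each piece `Eᵢ` of the decomposition the composition with the norming
functional `ξᵢ` has derivative at least `(1-ε)` times the pointwise Lipschitz
constant, almost everywhere on `Eᵢ`. -/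
theorem stmt_5 {Y : Type*} [NormedAddCommGroup Y] [NormedSpace ℝ Y] [CompleteSpace Y]
    (ξ : ℕ → (Y →L[ℝ] ℝ)) (hξ1 : ∀ i, ‖ξ i‖ ≤ 1)
    (hξnorm : ∀ x : Y, ‖x‖ = ⨆ i, ξ i x)
    (ε : ℝ) (hε : 0 < ε)
    (D : Set ℝ) (hD : MeasurableSet D)
    (γ : ℝ → Y) (L : ℝ≥0) (hγ : LipschitzOnWith L γ D) :
    ∃ (N : Set ℝ) (E : ℕ → Set ℝ), MeasurableSet N ∧ (∀ i, MeasurableSet (E i)) ∧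
      D = N ∪ ⋃ i, E i ∧ volume N = 0 ∧
      ∀ i, ∀ᵐ t ∂(volume.restrict (E i)), ∃ d' : ℝ,
        HasDerivWithinAt (fun s => ξ i (γ s)) d' D t ∧
        (1 - ε) * lipWithinAt γ D t ≤ d' := by
  classical
  set g : ℕ → ℝ → ℝ := fun i s => ξ i (γ s) with hgdef
  have hglip : ∀ i, LipschitzOnWith L (g i) D := by
    intro i
    have h1 : LipschitzOnWith (‖ξ i‖₊ * L) (g i) D :=
      LipschitzWith.comp_lipschitzOnWith (ξ i).lipschitz hγ
    intro x hx y hy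
    refine le_trans (h1 hx hy) ?_
    have hle : ‖ξ i‖₊ * L ≤ L :=
      mul_le_of_le_one_left zero_le (by exact_mod_cast hξ1 i)
    exact mul_le_mul_left (by exact_mod_cast hle) _
  choose G hGlip hGeq using fun i => (hglip i).extend_real
  have habs : ∀ i t, |deriv (G i) t| ≤ (L : ℝ) := fun i t => abs_deriv_le_of_lip (hGlip i) t
  set M : ℝ → ℝ := fun t => ⨆ i, deriv (G i) t with hMdef
  have hbdd : ∀ t, BddAbove (range fun i => deriv (G i) t) := fun t =>
    ⟨L, by rintro x ⟨i, rfl⟩; exact (abs_le.1 (habs i t)).2⟩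
  have hMub : ∀ t, M t ≤ L := fun t => ciSup_le fun i => (abs_le.1 (habs i t)).2
  have hMlb : ∀ t, -(L : ℝ) ≤ M t :=
    fun t => le_ciSup_of_le (hbdd t) 0 (abs_le.1 (habs 0 t)).1
  have hMabs : ∀ t, |M t| ≤ L := fun t => abs_le.2 ⟨hMlb t, hMub t⟩
  have hMmeas : Measurable M := Measurable.iSup fun i => measurable_deriv (G i)
  have hbint : ∀ (f : ℝ → ℝ), Measurable f → ∀ C : ℝ, (∀ x, |f x| ≤ C) →
      ∀ s : Set ℝ, volume s ≠ ∞ → IntegrableOn f s := fun f hf C hC s hs =>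
    Measure.integrableOn_of_bounded hs hf.aestronglyMeasurable
      (Eventually.of_forall fun x => hC x)
  have hMloc : LocallyIntegrable M volume := by
    rw [locallyIntegrable_iff]
    intro k hk
    exact hbint M hMmeas L hMabs k hk.measure_lt_top.ne
  have hIocvol : ∀ a b : ℝ, volume (uIoc a b) ≠ ∞ := by
    intro a b
    rw [uIoc, Real.volume_Ioc]
    exact ENNReal.ofReal_ne_top
  have hMint : ∀ a b : ℝ, IntervalIntegrable M volume a b := fun a b =>
    intervalIntegrable_iff.2 (hbint M hMmeas L hMabs _ (hIocvol a b))
  have hGint : ∀ i (a b : ℝ), IntervalIntegrable (deriv (G i)) volume a b := fun i a b =>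
    intervalIntegrable_iff.2 (hbint _ (measurable_deriv (G i)) L (habs i) _ (hIocvol a b))
  -- the key integral inequality
  have claim : ∀ a ∈ D, ∀ b ∈ D, a ≤ b → ‖γ b - γ a‖ ≤ ∫ u in a..b, M u := by
    intro a ha b hb hab
    rw [hξnorm (γ b - γ a)]
    refine ciSup_le fun i => ?_
    have hξi : (ξ i) (γ b - γ a) = G i b - G i a := by
      rw [map_sub, ← hGeq i ha, ← hGeq i hb]
    rw [hξi, lip_ftc (hGlip i) a b]
    refine intervalIntegral.integral_mono_on hab (hGint i a b) (hMint a b) fun x _ => ?_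
    exact le_ciSup (hbdd x) i
  -- the good set
  set P : ℝ → Prop := fun t => (∀ j, DifferentiableAt ℝ (G j) t) ∧
    Tendsto (fun r => ⨍ y in closedBall t r, ‖M y - M t‖) (𝓝[>] 0) (𝓝 0) with hPdef
  have hae : ∀ᵐ t : ℝ, P t := by
    refine Eventually.and ?_ ?_
    · exact ae_all_iff.2 fun j => (hGlip j).ae_differentiableAt_of_real
    · filter_upwards [IsUnifLocDoublingMeasure.ae_tendsto_average_norm_sub
        (volume : Measure ℝ) hMloc 1] with t ht
      refine ht (fun _ : ℝ => t) id tendsto_id ?_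
      filter_upwards [self_mem_nhdsWithin] with r hr
      exact mem_closedBall_self (by rw [one_mul]; exact le_of_lt hr)
  set T := toMeasurable volume {t | ¬ P t} with hTdef
  have hTnull : volume T = 0 := by
    rw [hTdef, measure_toMeasurable]
    exact hae
  set N := D ∩ T with hNdef
  have hNmeas : MeasurableSet N := hD.inter (measurableSet_toMeasurable _ _)
  have hNnull : volume N = 0 :=
    le_antisymm (le_trans (measure_mono inter_subset_right) hTnull.le) zero_le
  set S := D \ T with hSdef
  have hSmeas : MeasurableSet S := hD.diff (measurableSet_toMeasurable _ _)
  set ε' : ℝ := min ε 2⁻¹ with hε'def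
  have hε'pos : 0 < ε' := lt_min hε (by norm_num)
  have hε'le : ε' ≤ ε := min_le_left _ _
  have hε'half : ε' ≤ 2⁻¹ := min_le_right _ _
  set E : ℕ → Set ℝ := fun i =>
    S ∩ ({t | (1 - ε') * M t ≤ deriv (G i) t} ∪ {t | M t ≤ 0}) with hEdef
  have hEmeas : ∀ i, MeasurableSet (E i) := fun i =>
    hSmeas.inter ((measurableSet_le (measurable_const.mul hMmeas)
      (measurable_deriv (G i))).union (measurableSet_le hMmeas measurable_const))
  have hdecomp : D = N ∪ ⋃ i, E i := by
    apply Subset.antisymm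
    · intro t ht
      by_cases htT : t ∈ T
      · exact Or.inl ⟨ht, htT⟩
      · have htS : t ∈ S := ⟨ht, htT⟩
        right
        rcases le_or_gt (M t) 0 with hM0 | hM0
        · exact mem_iUnion.2 ⟨0, htS, Or.inr hM0⟩
        · have hlt : (1 - ε') * M t < M t := by nlinarith
          obtain ⟨i, hi⟩ := exists_lt_of_lt_ciSup hlt
          exact mem_iUnion.2 ⟨i, htS, Or.inl hi.le⟩
    · rintro t (h1 | ht)
      · exact h1.1
      · obtain ⟨i, hti⟩ := mem_iUnion.1 ht
        exact hti.1.1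
  refine ⟨N, E, hNmeas, hEmeas, hdecomp, hNnull, fun i => ?_⟩
  refine ae_restrict_of_forall_mem (hEmeas i) fun t ht => ?_
  obtain ⟨⟨htD, htT⟩, hcase⟩ := ht
  have hgood : P t := by
    by_contra hc
    exact htT (subset_toMeasurable _ _ hc)
  obtain ⟨hdiff, hleb⟩ := hgood
  have hlip_eq : lipWithinAt γ D t
      = limsup (fun s => dist (γ s) (γ t) / dist s t) (𝓝[D \ {t}] t) := rfl
  by_cases hbot : 𝓝[D \ {t}] t = ⊥
  · refine ⟨0, ?_, ?_⟩
    · rw [hasDerivWithinAt_iff_tendsto_slope, hbot]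
      exact tendsto_bot
    · have hz : lipWithinAt γ D t = 0 := by
        rw [hlip_eq, hbot, limsup_eq]
        have : {a : ℝ | ∀ᶠ s in (⊥ : Filter ℝ), dist (γ s) (γ t) / dist s t ≤ a} = univ := by
          ext a; simp
        rw [this, csInf_of_not_bddBelow ?_, Real.sInf_empty]
        rintro ⟨x, hx⟩
        have h1 := hx (mem_univ (x - 1))
        linarith
      rw [hz, mul_zero]
  haveI hne : (𝓝[D \ {t}] t).NeBot := ⟨hbot⟩
  set ψ : ℝ → ℝ := fun s => M t + 2 * ⨍ y in closedBall t |s - t|, ‖M y - M t‖ with hψdef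
  have havg : ∀ r : ℝ, 0 < r → ∫ y in closedBall t r, ‖M y - M t‖
      = (2 * r) * ⨍ y in closedBall t r, ‖M y - M t‖ := by
    intro r hr
    rw [setAverage_eq, measureReal_def, Real.volume_closedBall, ENNReal.toReal_ofReal (by positivity),
      smul_eq_mul, ← mul_assoc, mul_inv_cancel₀ (by positivity), one_mul]
  have hcbint : ∀ r : ℝ, IntegrableOn (fun y => ‖M y - M t‖) (closedBall t r) := by
    intro r
    refine hbint _ ((hMmeas.sub measurable_const).norm) (2 * L) (fun x => ?_) _ ?_
    · rw [abs_norm, Real.norm_eq_abs]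
      calc |M x - M t| ≤ |M x| + |M t| := abs_sub _ _
        _ ≤ L + L := add_le_add (hMabs x) (hMabs t)
        _ = 2 * L := by ring
    · rw [Real.volume_closedBall]; exact ENNReal.ofReal_ne_top
  have hub : ∀ s ∈ D \ {t}, dist (γ s) (γ t) / dist s t ≤ ψ s := by
    rintro s ⟨hsD, hst⟩
    have hst' : s ≠ t := hst
    have hr : 0 < |s - t| := abs_pos.2 (sub_ne_zero.2 hst')
    have hI : dist (γ s) (γ t) ≤ |s - t| * M t
        + ∫ y in closedBall t |s - t|, ‖M y - M t‖ := by
      have hIoc : ∀ a b : ℝ, a ≤ b → Ioc a b ⊆ closedBall t |s - t| →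
          a ∈ D → b ∈ D → b - a = |s - t| →
          ‖γ b - γ a‖ ≤ |s - t| * M t + ∫ y in closedBall t |s - t|, ‖M y - M t‖ := by
        intro a b hab hsub haD hbD hba
        have h1 : ‖γ b - γ a‖ ≤ ∫ u in a..b, M u := claim a haD b hbD hab
        have h2 : ∫ u in a..b, M u = (b - a) * M t + ∫ u in a..b, (M u - M t) := by
          rw [intervalIntegral.integral_sub (hMint a b) intervalIntegrable_const,
            intervalIntegral.integral_const, smul_eq_mul]
          ring
        have h3 : ∫ u in a..b, (M u - M t) ≤ ∫ u in a..b, ‖M u - M t‖ := by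
          refine intervalIntegral.integral_mono_on hab
            ((hMint a b).sub intervalIntegrable_const)
            (intervalIntegrable_iff.2 ((hcbint |s - t|).mono_set ?_)) fun x _ => le_abs_self _
          intro y hy
          rw [uIoc_of_le hab] at hy
          exact hsub hy
        have h4 : ∫ u in a..b, ‖M u - M t‖ = ∫ u in Ioc a b, ‖M u - M t‖ :=
          intervalIntegral.integral_of_le hab
        have h5 : ∫ u in Ioc a b, ‖M u - M t‖ ≤ ∫ y in closedBall t |s - t|, ‖M y - M t‖ := by
          refine setIntegral_mono_set (hcbint _) ?_ (HasSubset.Subset.eventuallyLE hsub)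
          exact Eventually.of_forall fun y => norm_nonneg _
        have hMt : (b - a) * M t = |s - t| * M t := by rw [hba]
        calc ‖γ b - γ a‖ ≤ ∫ u in a..b, M u := h1
          _ = (b - a) * M t + ∫ u in a..b, (M u - M t) := h2
          _ ≤ (b - a) * M t + ∫ y in closedBall t |s - t|, ‖M y - M t‖ := by
              have := le_trans h3 (le_of_eq h4 |>.trans h5)
              linarith [le_trans h3 (h4 ▸ h5)]
          _ ≤ |s - t| * M t + ∫ y in closedBall t |s - t|, ‖M y - M t‖ := by
              linarith
      rcases le_total s t with hle | hle
      · have habs' : |s - t| = t - s := by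
          rw [abs_of_nonpos (by linarith)]; ring
        have := hIoc s t hle ?_ hsD htD (by rw [habs'])
        · rw [dist_eq_norm, norm_sub_rev]
          exact this
        · intro y hy
          rw [mem_closedBall, Real.dist_eq]
          rw [habs']
          rcases hy with ⟨hy1, hy2⟩
          rw [abs_le]; constructor <;> linarith
      · have habs' : |s - t| = s - t := abs_of_nonneg (by linarith)
        have := hIoc t s hle ?_ htD hsD (by rw [habs'])
        · rw [dist_eq_norm]
          exact this
        · intro y hy
          rw [mem_closedBall, Real.dist_eq, habs']
          rcases hy with ⟨hy1, hy2⟩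
          rw [abs_le]; constructor <;> linarith
    have hds : dist s t = |s - t| := Real.dist_eq s t
    rw [hψdef]
    simp only
    rw [hds, div_le_iff₀ hr]
    rw [havg _ hr] at hI
    nlinarith [hI]
  have hψlim : Tendsto ψ (𝓝[D \ {t}] t) (𝓝 (M t)) := by
    have h1 : Tendsto (fun s => |s - t|) (𝓝[D \ {t}] t) (𝓝[>] 0) := by
      apply tendsto_nhdsWithin_of_tendsto_nhds_of_eventually_within
      · have hc : Tendsto (fun s : ℝ => |s - t|) (𝓝 t) (𝓝 |t - t|) :=
          ((continuous_id.sub continuous_const).abs).tendsto t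
        simpa using hc.mono_left nhdsWithin_le_nhds
      · filter_upwards [self_mem_nhdsWithin] with s hs
        exact abs_pos.2 (sub_ne_zero.2 hs.2)
    have h2 := hleb.comp h1
    have h3 : Tendsto ψ (𝓝[D \ {t}] t) (𝓝 (M t + 2 * 0)) :=
      tendsto_const_nhds.add (tendsto_const_nhds.mul h2)
    simpa using h3
  have hubE : ∀ᶠ s in 𝓝[D \ {t}] t, dist (γ s) (γ t) / dist s t ≤ ψ s := by
    filter_upwards [self_mem_nhdsWithin] with s hs using hub s hs
  have hnn : ∀ᶠ s in 𝓝[D \ {t}] t, 0 ≤ dist (γ s) (γ t) / dist s t :=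
    Eventually.of_forall fun s => div_nonneg dist_nonneg dist_nonneg
  have hbddratio : IsBoundedUnder (· ≤ ·) (𝓝[D \ {t}] t)
      (fun s => dist (γ s) (γ t) / dist s t) :=
    hψlim.isBoundedUnder_le.mono_le hubE
  have hlipub : lipWithinAt γ D t ≤ M t := by
    rw [hlip_eq]
    have h1 := limsup_le_limsup hubE
      ((isBoundedUnder_of (r := (· ≥ ·)) ⟨0, fun s => div_nonneg dist_nonneg dist_nonneg⟩).isCoboundedUnder_le)
      hψlim.isBoundedUnder_le
    rwa [hψlim.limsup_eq] at h1
  have hlip0 : 0 ≤ lipWithinAt γ D t := by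
    rw [hlip_eq]
    exact le_limsup_of_frequently_le hnn.frequently hbddratio
  have hMt0 : 0 ≤ M t := le_trans hlip0 hlipub
  rcases hcase with hcase | hcase
  · refine ⟨deriv (G i) t, ?_, ?_⟩
    · have h1 : HasDerivWithinAt (G i) (deriv (G i) t) D t :=
        (hdiff i).hasDerivAt.hasDerivWithinAt
      exact h1.congr (fun y hy => hGeq i hy) (hGeq i htD)
    · calc (1 - ε) * lipWithinAt γ D t ≤ (1 - ε') * lipWithinAt γ D t :=
          mul_le_mul_of_nonneg_right (by linarith) hlip0
        _ ≤ (1 - ε') * M t := mul_le_mul_of_nonneg_left hlipub (by norm_num; linarith)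
        _ ≤ deriv (G i) t := hcase
  · have hMt : M t = 0 := le_antisymm hcase hMt0
    have hratio : Tendsto (fun s => dist (γ s) (γ t) / dist s t) (𝓝[D \ {t}] t) (𝓝 0) := by
      refine tendsto_of_tendsto_of_tendsto_of_le_of_le' tendsto_const_nhds ?_ hnn hubE
      rwa [hMt] at hψlim
    have hlipz : lipWithinAt γ D t = 0 := by
      rw [hlip_eq]
      exact hratio.limsup_eq
    refine ⟨0, ?_, by rw [hlipz, mul_zero]⟩
    rw [hasDerivWithinAt_iff_tendsto_slope]
    refine squeeze_zero_norm' ?_ hratio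
    filter_upwards [self_mem_nhdsWithin] with s hs
    have hst : s ≠ t := hs.2
    rw [slope_def_field, Real.norm_eq_abs, abs_div]
    have h1 : |ξ i (γ s) - ξ i (γ t)| ≤ dist (γ s) (γ t) := by
      rw [← map_sub, dist_eq_norm]
      calc |ξ i (γ s - γ t)| ≤ ‖ξ i‖ * ‖γ s - γ t‖ := (ξ i).le_opNorm _
        _ ≤ 1 * ‖γ s - γ t‖ := mul_le_mul_of_nonneg_right (hξ1 i) (norm_nonneg _)
        _ = ‖γ s - γ t‖ := one_mul _
    have h2 : dist s t = |s - t| := Real.dist_eq s t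
    rw [h2]
    gcongr
end

section
/- Let $Y$ be a Banach space with a countable norming family $\{\xi_i\} \subseteq \overline{B_{Y^*}}$, let $\gamma : D \to Y$ be $1$-Lipschitz on a Borel set $D \subseteq \mathbb{R}$, and $0 < \epsilon < 1$. Then for every positive-measure subset $S \subseteq D$ there exist an index $i$ and a positive-measure Borel subset $E \subseteq S$ such that $(\xi_i \circ \gamma)'(t) \geq (1-\epsilon)\,\mathrm{Lip}(\gamma,t)$ for all $t \in E$. -/
open MeasureTheory Metric Set Filter
open scoped NNReal ENNReal
open scoped Topology

lemma aux_mono_integral_deriv_le {g : ℝ → ℝ} (hg : Monotone g) (hc : Continuous g)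
    {a b : ℝ} (hab : a ≤ b) : ∫ t in Set.Ioc a b, deriv g t ≤ g b - g a := by
  have hst : ∀ x, hg.stieltjesFunction x = g x := by
    intro x
    rw [hg.stieltjesFunction_eq]
    exact rightLim_eq_of_tendsto
      ((hc.tendsto x).mono_left nhdsWithin_le_nhds)
  have hae : ∀ᵐ x, deriv g x = (Measure.rnDeriv hg.stieltjesFunction.measure volume x).toReal :=
    hg.ae_hasDerivAt.mono fun x hx => hx.deriv
  calc ∫ t in Set.Ioc a b, deriv g t
      = ∫ t in Set.Ioc a b,
          (Measure.rnDeriv hg.stieltjesFunction.measure volume t).toReal :=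
        integral_congr_ae (ae_restrict_of_ae hae)
    _ ≤ (hg.stieltjesFunction.measure (Set.Ioc a b)).toReal := by
        apply Measure.setIntegral_toReal_rnDeriv_le
        rw [StieltjesFunction.measure_Ioc]
        exact ENNReal.ofReal_ne_top
    _ = g b - g a := by
        rw [StieltjesFunction.measure_Ioc, hst, hst,
          ENNReal.toReal_ofReal (sub_nonneg.2 (hg hab))]

lemma aux_abs_deriv_le {f : ℝ → ℝ} (hf : LipschitzWith 1 f) (t : ℝ) : |deriv f t| ≤ 1 := by
  by_cases h : DifferentiableAt ℝ f t
  · have hs : Tendsto (slope f t) (𝓝[≠] t) (𝓝 (deriv f t)) :=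
      hasDerivAt_iff_tendsto_slope.1 h.hasDerivAt
    refine le_of_tendsto hs.abs ?_
    filter_upwards [self_mem_nhdsWithin] with s hs'
    have h1 : |f s - f t| ≤ |s - t| := by
      simpa [Real.dist_eq] using hf.dist_le_mul s t
    rw [slope_def_field, abs_div]
    exact div_le_one_of_le₀ h1 (abs_nonneg _)
  · simp [deriv_zero_of_not_differentiableAt h]

lemma aux_integrableOn_deriv {f : ℝ → ℝ} (hf : LipschitzWith 1 f) {a b : ℝ} :
    IntegrableOn (deriv f) (Set.Ioc a b) :=
  Measure.integrableOn_of_bounded (by simp [Real.volume_Ioc])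
    (measurable_deriv f).aestronglyMeasurable
    (ae_of_all _ fun t => by simpa using aux_abs_deriv_le hf t)

lemma aux_sub_le_integral {f : ℝ → ℝ} (hf : LipschitzWith 1 f) {a b : ℝ} (hab : a ≤ b) :
    f b - f a ≤ ∫ t in Set.Ioc a b, deriv f t := by
  set g : ℝ → ℝ := fun x => x - f x with hgdef
  have hmono : Monotone g := by
    intro x y hxy
    have h1 : |f x - f y| ≤ |x - y| := by
      simpa [Real.dist_eq] using hf.dist_le_mul x y
    have h2 := (abs_le.1 h1).1
    have h3 : |x - y| = y - x := by rw [abs_sub_comm, abs_of_nonneg (by linarith)]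
    simp only [hgdef]
    rw [h3] at h2
    linarith
  have hcont : Continuous g := continuous_id.sub hf.continuous
  have hae : ∀ᵐ x, deriv g x = 1 - deriv f x := by
    filter_upwards [hf.ae_differentiableAt (μ := volume)] with x hx
    exact ((hasDerivAt_id x).sub hx.hasDerivAt).deriv
  have hconst : IntegrableOn (fun _ : ℝ => (1:ℝ)) (Set.Ioc a b) :=
    Measure.integrableOn_of_bounded (by simp [Real.volume_Ioc])
      aestronglyMeasurable_const (M := 1) (ae_of_all _ fun t => by norm_num)
  have hint : ∫ t in Set.Ioc a b, deriv g t = (b - a) - ∫ t in Set.Ioc a b, deriv f t := by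
    rw [integral_congr_ae (ae_restrict_of_ae hae),
      integral_sub hconst (aux_integrableOn_deriv hf)]
    simp [Real.volume_Ioc, ENNReal.toReal_ofReal (sub_nonneg.2 hab), hab]
  have hle := aux_mono_integral_deriv_le hmono hcont hab
  rw [hint] at hle
  simp only [hgdef] at hle
  linarith

lemma aux_neBot_of_tendsto {B D : Set ℝ} (hBD : B ⊆ D) {t : ℝ}
    (ht : Tendsto (fun r => volume (B ∩ closedBall t r) / volume (closedBall t r))
      (𝓝[>] 0) (𝓝 1)) :
    (𝓝[D \ {t}] t).NeBot := by
  rw [← mem_closure_iff_nhdsWithin_neBot, Metric.mem_closure_iff]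
  intro δ hδ
  have h1 : ∀ᶠ r in 𝓝[>] (0:ℝ),
      0 < volume (B ∩ closedBall t r) / volume (closedBall t r) :=
    ht.eventually (eventually_gt_nhds zero_lt_one)
  have h2 : Set.Ioo (0:ℝ) δ ∈ 𝓝[>] (0:ℝ) := Ioo_mem_nhdsGT_of_mem ⟨le_refl _, hδ⟩
  obtain ⟨r, hr1, hr2⟩ := (h1.and (eventually_of_mem h2 fun x hx => hx)).exists
  have hnum : volume (B ∩ closedBall t r) ≠ 0 := by
    intro h0
    rw [h0, ENNReal.zero_div] at hr1
    exact lt_irrefl _ hr1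
  have hC : volume ((B ∩ closedBall t r) \ {t}) ≠ 0 := by
    intro h0
    have := measure_diff_null (s := B ∩ closedBall t r) (Real.volume_singleton (a := t))
    exact hnum (this ▸ h0)
  obtain ⟨s, hs⟩ := nonempty_of_measure_ne_zero hC
  refine ⟨s, ⟨hBD hs.1.1, hs.2⟩, ?_⟩
  have := hs.1.2
  rw [mem_closedBall] at this
  rw [dist_comm]
  exact lt_of_le_of_lt this hr2.2

lemma aux_quot_nonneg {Y : Type*} [NormedAddCommGroup Y] (γ : ℝ → Y) (t s : ℝ) :
    0 ≤ dist (γ s) (γ t) / dist s t :=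
  div_nonneg dist_nonneg dist_nonneg

lemma aux_key {Y : Type*} [NormedAddCommGroup Y]
    (γ : ℝ → Y) (D : Set ℝ) (hD : MeasurableSet D)
    (g : ℕ → ℝ → ℝ) (hg : ∀ i, LipschitzWith 1 (g i))
    (hnorm : ∀ a ∈ D, ∀ b ∈ D, ∀ M : ℝ, (∀ i, g i b - g i a ≤ M) → ‖γ b - γ a‖ ≤ M)
    (c : ℝ) :
    ∀ᵐ t, (t ∈ D ∧ ∀ i, deriv (g i) t ≤ c) →
      Filter.limsup (fun s => dist (γ s) (γ t) / dist s t) (nhdsWithin t (D \ {t})) ≤ c := by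
  set B : Set ℝ := D ∩ {t | ∀ i, deriv (g i) t ≤ c} with hBdef
  have hBmeas : MeasurableSet B := by
    apply hD.inter
    have : {t : ℝ | ∀ i, deriv (g i) t ≤ c} = ⋂ i, {t | deriv (g i) t ≤ c} := by
      ext x; simp
    rw [this]
    exact MeasurableSet.iInter fun i =>
      measurableSet_le (measurable_deriv (g i)) measurable_const
  filter_upwards [Besicovitch.ae_tendsto_measure_inter_div_of_measurableSet volume hBmeas]
    with t ht hmem
  have htB : t ∈ B := ⟨hmem.1, hmem.2⟩
  have ht1 : Tendsto (fun r => volume (B ∩ closedBall t r) / volume (closedBall t r))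
      (𝓝[>] 0) (𝓝 1) := by
    have : B.indicator (1 : ℝ → ℝ≥0∞) t = 1 := by rw [indicator_of_mem htB]; rfl
    rwa [this] at ht
  have hNB : (𝓝[D \ {t}] t).NeBot :=
    aux_neBot_of_tendsto (hBdef ▸ inter_subset_left) ht1
  have hcob : IsCoboundedUnder (· ≤ ·) (𝓝[D \ {t}] t)
      (fun s => dist (γ s) (γ t) / dist s t) :=
    isCoboundedUnder_le_of_eventually_le _ (x := 0)
      (Eventually.of_forall fun s => aux_quot_nonneg γ t s)
  refine le_of_forall_pos_le_add fun ε' hε' => ?_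
  have h1c : (0:ℝ) < 1 + |c| := by positivity
  set δ' : ℝ := ε' / (2*(1+|c|)) with hδ'
  have hδ'pos : 0 < δ' := by positivity
  -- eventual smallness of the complement of B in closed balls
  have hev : ∀ᶠ r in 𝓝[>] (0:ℝ), (volume (closedBall t r \ B)).toReal ≤ δ' * (2*r) := by
    have h2 : Tendsto (fun r => (volume (B ∩ closedBall t r)).toReal /
        (volume (closedBall t r)).toReal) (𝓝[>] (0:ℝ)) (𝓝 1) := by
      have := (ENNReal.tendsto_toReal (by norm_num : (1:ℝ≥0∞) ≠ ⊤)).comp ht1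
      simpa [Function.comp_def, ENNReal.toReal_div] using this
    have h3 : ∀ᶠ r in 𝓝[>] (0:ℝ), 1 - δ' < (volume (B ∩ closedBall t r)).toReal /
        (volume (closedBall t r)).toReal :=
      h2.eventually (eventually_gt_nhds (by linarith))
    filter_upwards [h3, self_mem_nhdsWithin] with r hr hrpos
    have hr0 : (0:ℝ) < r := hrpos
    have hcb : volume (closedBall t r) = ENNReal.ofReal (2*r) := Real.volume_closedBall t r
    have hfincb : volume (closedBall t r) ≠ ⊤ := by rw [hcb]; exact ENNReal.ofReal_ne_top
    have hadd := measure_inter_add_diff (μ := volume) (closedBall t r) hBmeas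
    have hfin1 : volume (closedBall t r ∩ B) ≠ ⊤ :=
      ne_top_of_le_ne_top hfincb (measure_mono inter_subset_left)
    have hfin2 : volume (closedBall t r \ B) ≠ ⊤ :=
      ne_top_of_le_ne_top hfincb (measure_mono diff_subset)
    have haddR : (volume (closedBall t r ∩ B)).toReal
        + (volume (closedBall t r \ B)).toReal = 2*r := by
      rw [← ENNReal.toReal_add hfin1 hfin2, hadd, hcb, ENNReal.toReal_ofReal (by linarith)]
    have hcbR : (volume (closedBall t r)).toReal = 2*r := by
      rw [hcb, ENNReal.toReal_ofReal (by linarith)]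
    rw [hcbR, show B ∩ closedBall t r = closedBall t r ∩ B from inter_comm _ _] at hr
    have hx := (lt_div_iff₀ (by linarith : (0:ℝ) < 2*r)).1 hr
    nlinarith
  obtain ⟨u, hu, hsubu⟩ := mem_nhdsGT_iff_exists_Ioo_subset.1 hev
  have hu0 : (0:ℝ) < u := hu
  -- the eventual bound on the difference quotient
  have hevQ : ∀ᶠ s in 𝓝[D \ {t}] t, dist (γ s) (γ t) / dist s t ≤ c + ε' := by
    filter_upwards [self_mem_nhdsWithin,
      mem_nhdsWithin_of_mem_nhds (Metric.ball_mem_nhds t hu0)] with s hsD hsball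
    have hsnet : s ≠ t := hsD.2
    set a := min s t with hadef
    set b := max s t with hbdef
    have hab : a < b := min_lt_max.2 hsnet
    have htD : t ∈ D := hmem.1
    have hta : t = a ∨ t = b := by
      rcases le_total s t with h|h
      · right; rw [hbdef, max_eq_right h]
      · left; rw [hadef, min_eq_right h]
    have haD : a ∈ D := by
      rcases le_total s t with h|h
      · rw [hadef, min_eq_left h]; exact hsD.1
      · rw [hadef, min_eq_right h]; exact htD
    have hbD : b ∈ D := by
      rcases le_total s t with h|h
      · rw [hbdef, max_eq_right h]; exact htD
      · rw [hbdef, max_eq_left h]; exact hsD.1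
    have hdiste : dist s t = b - a := by
      rw [Real.dist_eq]
      rcases le_total s t with h|h
      · rw [abs_of_nonpos (by linarith), hadef, hbdef, min_eq_left h, max_eq_right h]; ring
      · rw [abs_of_nonneg (by linarith), hadef, hbdef, min_eq_right h, max_eq_left h]
    have hba_pos : 0 < b - a := by linarith
    have hba_lt : b - a < u := by rw [← hdiste]; exact mem_ball.1 hsball
    have hsubI : Set.Ioc a b ⊆ closedBall t (b - a) := by
      intro x hx
      rw [mem_closedBall, Real.dist_eq, abs_le]
      rcases hta with h|h
      · rw [← h]; constructor <;> [linarith [hx.1, hx.2, hab]; linarith [hx.2]]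
      · rw [← h]; constructor <;> [linarith [hx.1]; linarith [hx.2, hab]]
    have hfinI : volume (Set.Ioc a b) ≠ ⊤ := by
      rw [Real.volume_Ioc]; exact ENNReal.ofReal_ne_top
    have hfinI1 : volume (Set.Ioc a b ∩ B) ≠ ⊤ :=
      ne_top_of_le_ne_top hfinI (measure_mono inter_subset_left)
    have hfinI2 : volume (Set.Ioc a b \ B) ≠ ⊤ :=
      ne_top_of_le_ne_top hfinI (measure_mono diff_subset)
    have hIvolR : (volume (Set.Ioc a b ∩ B)).toReal
        + (volume (Set.Ioc a b \ B)).toReal = b - a := by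
      rw [← ENNReal.toReal_add hfinI1 hfinI2, measure_inter_add_diff _ hBmeas,
        Real.volume_Ioc, ENNReal.toReal_ofReal (by linarith)]
    have hcompl : (volume (Set.Ioc a b \ B)).toReal ≤ δ' * (2*(b-a)) := by
      have hmon : volume (Set.Ioc a b \ B) ≤ volume (closedBall t (b-a) \ B) :=
        measure_mono (diff_subset_diff_left hsubI)
      have hfin : volume (closedBall t (b-a) \ B) ≠ ⊤ :=
        ne_top_of_le_ne_top (by rw [Real.volume_closedBall]; exact ENNReal.ofReal_ne_top)
          (measure_mono diff_subset)
      exact le_trans (ENNReal.toReal_mono hfin hmon) (hsubu ⟨hba_pos, hba_lt⟩)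
    have hnonneg1 : 0 ≤ (volume (Set.Ioc a b ∩ B)).toReal := ENNReal.toReal_nonneg
    have hnonneg2 : 0 ≤ (volume (Set.Ioc a b \ B)).toReal := ENNReal.toReal_nonneg
    have hkey : ∀ i, g i b - g i a ≤ c*(b-a) + (1+|c|)*(δ'*(2*(b-a))) := by
      intro i
      have h1 := aux_sub_le_integral (hg i) hab.le
      have hint := aux_integrableOn_deriv (hg i) (a := a) (b := b)
      have hsplit := integral_inter_add_diff (μ := volume) (s := Set.Ioc a b)
        (f := deriv (g i)) hBmeas hint
      have hb1 : ∫ x in Set.Ioc a b ∩ B, deriv (g i) x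
          ≤ c * (volume (Set.Ioc a b ∩ B)).toReal := by
        have hmono := setIntegral_mono_on (μ := volume)
          (hint.mono_set inter_subset_left)
          (integrableOn_const hfinI1)
          (measurableSet_Ioc.inter hBmeas) (fun x hx => hx.2.2 i)
        rw [setIntegral_const, smul_eq_mul, mul_comm] at hmono
        exact hmono
      have hb2 : ∫ x in Set.Ioc a b \ B, deriv (g i) x
          ≤ (volume (Set.Ioc a b \ B)).toReal := by
        have hmono := setIntegral_mono_on (μ := volume)
          (hint.mono_set diff_subset)
          (integrableOn_const hfinI2)
          (measurableSet_Ioc.diff hBmeas)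
          (fun x _ => (abs_le.1 (aux_abs_deriv_le (hg i) x)).2)
        rw [setIntegral_const, smul_eq_mul, mul_one] at hmono
        exact hmono
      set x := (volume (Set.Ioc a b ∩ B)).toReal
      have hxge : (b-a) - x ≤ δ'*(2*(b-a)) := by linarith
      have hxle : x ≤ b - a := by linarith
      have hcx : c * x ≤ c*(b-a) + |c| * (δ'*(2*(b-a))) := by
        rcases abs_cases c with ⟨hce, hc0⟩ | ⟨hce, hc0⟩
        · nlinarith [mul_le_mul_of_nonneg_left hxle hc0,
            mul_nonneg hc0 (mul_nonneg hδ'pos.le (by linarith : (0:ℝ) ≤ 2*(b-a)))]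
        · nlinarith [mul_le_mul_of_nonneg_left hxge (by linarith : (0:ℝ) ≤ -c)]
      linarith
    have hnormb := hnorm a haD b hbD _ hkey
    have hdistγ : dist (γ s) (γ t) = ‖γ b - γ a‖ := by
      rcases le_total s t with h|h
      · rw [dist_eq_norm, hbdef, hadef, max_eq_right h, min_eq_left h, norm_sub_rev]
      · rw [dist_eq_norm, hbdef, hadef, max_eq_left h, min_eq_right h]
    rw [hdistγ, hdiste, div_le_iff₀ hba_pos]
    calc ‖γ b - γ a‖ ≤ c*(b-a) + (1+|c|)*(δ'*(2*(b-a))) := hnormb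
      _ = (c + ε')*(b - a) := by
          rw [hδ']; field_simp
  exact Filter.limsup_le_of_le hcob hevQ

lemma aux_lip_le_one {Y : Type*} [NormedAddCommGroup Y] {γ : ℝ → Y} {D : Set ℝ}
    (hγ : LipschitzOnWith 1 γ D) {t : ℝ} (htD : t ∈ D) (hNB : (𝓝[D \ {t}] t).NeBot) :
    lipWithinAt γ D t ≤ 1 := by
  apply Filter.limsup_le_of_le (isCoboundedUnder_le_of_eventually_le _ (x := 0)
    (Eventually.of_forall fun s => aux_quot_nonneg γ t s))
  filter_upwards [self_mem_nhdsWithin] with s hs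
  have hd : dist (γ s) (γ t) ≤ dist s t := by
    have := lipschitzOnWith_iff_dist_le_mul.1 hγ s hs.1 t htD
    simpa using this
  have hpos : 0 < dist s t := dist_pos.2 hs.2
  rw [div_le_one hpos]
  exact hd

/-- Key step: for a `1`-Lipschitz curve `γ` into a Banach space with countable norming
family `ξᵢ`, every positive-measure subset `S` of the domain contains a positive-measure
Borel subset on which some `(ξᵢ ∘ γ)'` is at least `(1-ε) Lip(γ,·)`. -/
theorem stmt_6 {Y : Type*} [NormedAddCommGroup Y] [NormedSpace ℝ Y] [CompleteSpace Y]
    (ξ : ℕ → (Y →L[ℝ] ℝ)) (hξ1 : ∀ i, ‖ξ i‖ ≤ 1)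
    (hξnorm : ∀ x : Y, ‖x‖ = ⨆ i, ξ i x)
    (ε : ℝ) (hε0 : 0 < ε) (hε1 : ε < 1)
    (D : Set ℝ) (hD : MeasurableSet D)
    (γ : ℝ → Y) (hγ : LipschitzOnWith 1 γ D) :
    ∀ S : Set ℝ, S ⊆ D → MeasurableSet S → 0 < volume S →
      ∃ (i : ℕ) (E : Set ℝ), MeasurableSet E ∧ E ⊆ S ∧ 0 < volume E ∧
        ∀ t ∈ E, ∃ d' : ℝ,
          HasDerivWithinAt (fun s => ξ i (γ s)) d' D t ∧
          (1 - ε) * lipWithinAt γ D t ≤ d' := by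
  classical
  intro S hSD hSmeas hSpos
  have hLipOn : ∀ i, LipschitzOnWith 1 (fun s => ξ i (γ s)) D := by
    intro i
    rw [lipschitzOnWith_iff_dist_le_mul]
    intro x hx y hy
    have h1 : dist (ξ i (γ x)) (ξ i (γ y)) ≤ ‖ξ i‖ * dist (γ x) (γ y) := by
      rw [dist_eq_norm, dist_eq_norm, ← map_sub]
      exact (ξ i).le_opNorm _
    have h2 : dist (γ x) (γ y) ≤ 1 * dist x y := by
      simpa using lipschitzOnWith_iff_dist_le_mul.1 hγ x hx y hy
    have h3 : ‖ξ i‖ * dist (γ x) (γ y) ≤ 1 * dist x y := by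
      nlinarith [dist_nonneg (x := γ x) (y := γ y), dist_nonneg (x := x) (y := y),
        (ξ i).opNorm_nonneg, hξ1 i]
    simpa using le_trans h1 h3
  choose g hgLip hgEq using fun i => (hLipOn i).extend_real
  have hnorm : ∀ a ∈ D, ∀ b ∈ D, ∀ M : ℝ, (∀ i, g i b - g i a ≤ M) → ‖γ b - γ a‖ ≤ M := by
    intro a ha b hb M hM
    rw [hξnorm (γ b - γ a)]
    refine ciSup_le fun i => ?_
    rw [map_sub, show (ξ i) (γ b) = g i b from hgEq i hb,
      show (ξ i) (γ a) = g i a from hgEq i ha]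
    exact hM i
  set r : ℝ := 1 - ε with hrdef
  have hr0 : 0 < r := by rw [hrdef]; linarith
  have hr1 : r < 1 := by rw [hrdef]; linarith
  set A : ℕ → Set ℝ := fun m => {t | ∀ i, deriv (g i) t ≤ r^m} with hAdef
  have hAmeas : ∀ m, MeasurableSet (A m) := by
    intro m
    have : A m = ⋂ i, {t | deriv (g i) t ≤ r^m} := by ext x; simp [hAdef]
    rw [this]
    exact MeasurableSet.iInter fun i =>
      measurableSet_le (measurable_deriv (g i)) measurable_const
  have hGood : ∀ᵐ t, ∀ i : ℕ, DifferentiableAt ℝ (g i) t :=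
    ae_all_iff.2 fun i => (hgLip i).ae_differentiableAt (μ := volume)
  have hML : ∀ᵐ t, ∀ m : ℕ, (t ∈ D ∧ ∀ i, deriv (g i) t ≤ r^m) → lipWithinAt γ D t ≤ r^m := by
    refine ae_all_iff.2 fun m => ?_
    filter_upwards [aux_key γ D hD g hgLip hnorm (r^m)] with t h hmem
    rw [lipWithinAt]
    exact h hmem
  have hNeBot : ∀ᵐ t, t ∈ S → (𝓝[D \ {t}] t).NeBot := by
    filter_upwards [Besicovitch.ae_tendsto_measure_inter_div_of_measurableSet volume hSmeas]
      with t ht htS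
    have hind : S.indicator (1 : ℝ → ℝ≥0∞) t = 1 := by rw [indicator_of_mem htS]; rfl
    rw [hind] at ht
    exact aux_neBot_of_tendsto hSD ht
  obtain ⟨N, hZN, hNmeas, hNnull⟩ :=
    exists_measurable_superset_of_null (ae_iff.1 ((hGood.and hML).and hNeBot))
  set S' := S \ N with hS'def
  have hS'meas : MeasurableSet S' := hSmeas.diff hNmeas
  have hS'pos : 0 < volume S' := by
    rw [hS'def, measure_diff_null hNnull]
    exact hSpos
  have hS'sub : S' ⊆ S := diff_subset
  have hS'prop : ∀ t ∈ S', (∀ i : ℕ, DifferentiableAt ℝ (g i) t)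
      ∧ (∀ m : ℕ, (t ∈ D ∧ ∀ i, deriv (g i) t ≤ r^m) → lipWithinAt γ D t ≤ r^m)
      ∧ (t ∈ S → (𝓝[D \ {t}] t).NeBot) := by
    intro t ht
    by_contra hcon
    exact ht.2 (hZN (by simpa using hcon))
  by_cases hinf : 0 < volume (S' ∩ ⋂ m, A m)
  · -- here the pointwise Lipschitz constant vanishes on a positive measure set
    refine ⟨0, S' ∩ ⋂ m, A m, hS'meas.inter (MeasurableSet.iInter hAmeas),
      fun t ht => hS'sub ht.1, hinf, ?_⟩
    intro t ht
    obtain ⟨htS', htA⟩ := ht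
    obtain ⟨hdiff, hml, hnb⟩ := hS'prop t htS'
    have htD : t ∈ D := hSD (hS'sub htS')
    have hL0 : lipWithinAt γ D t ≤ 0 := by
      have hall : ∀ m : ℕ, lipWithinAt γ D t ≤ r^m := fun m =>
        hml m ⟨htD, mem_iInter.1 htA m⟩
      exact ge_of_tendsto (tendsto_pow_atTop_nhds_zero_of_lt_one hr0.le hr1)
        (Eventually.of_forall hall)
    have hmul : r * lipWithinAt γ D t ≤ 0 := by
      have := mul_le_mul_of_nonneg_left hL0 hr0.le
      simpa using this
    refine ⟨0, ?_, hmul⟩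
    rw [hasDerivWithinAt_iff_tendsto_slope]
    have hQ0 : Tendsto (fun s => dist (γ s) (γ t) / dist s t) (𝓝[D \ {t}] t) (𝓝 0) := by
      rw [tendsto_order]
      constructor
      · intro x hx
        exact Eventually.of_forall fun s => lt_of_lt_of_le hx (aux_quot_nonneg γ t s)
      · intro x hx
        have hbd : IsBoundedUnder (· ≤ ·) (𝓝[D \ {t}] t)
            (fun s => dist (γ s) (γ t) / dist s t) := by
          apply isBoundedUnder_of_eventually_le (a := 1)
          filter_upwards [self_mem_nhdsWithin] with s hs
          rw [div_le_one (dist_pos.2 hs.2)]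
          simpa using lipschitzOnWith_iff_dist_le_mul.1 hγ s hs.1 t htD
        have hlt : Filter.limsup (fun s => dist (γ s) (γ t) / dist s t)
            (𝓝[D \ {t}] t) < x := lt_of_le_of_lt hL0 hx
        exact eventually_lt_of_limsup_lt hlt hbd
    apply squeeze_zero_norm' ?_ hQ0
    filter_upwards [self_mem_nhdsWithin] with s hs
    have hsne : s ≠ t := hs.2
    rw [slope_def_field, Real.norm_eq_abs, abs_div, dist_eq_norm (γ s) (γ t), Real.dist_eq]
    apply div_le_div_of_nonneg_right ?_ (abs_nonneg _)
    rw [← map_sub]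
    have h1 := (ξ 0).le_opNorm (γ s - γ t)
    have h2 := hξ1 0
    have h3 := norm_nonneg (γ s - γ t)
    calc |(ξ 0) (γ s - γ t)| = ‖(ξ 0) (γ s - γ t)‖ := (Real.norm_eq_abs _).symm
      _ ≤ ‖γ s - γ t‖ := by nlinarith
  · -- main case: on a positive measure set some coordinate has a large derivative
    have hexm : ∃ m : ℕ, volume (S' \ A m) ≠ 0 := by
      by_contra hc
      push_neg at hc
      have hU : volume (⋃ m, S' \ A m) = 0 := measure_iUnion_null hc
      rw [← diff_iInter] at hU
      have hsplit : volume S' ≤ volume (S' ∩ ⋂ m, A m) + volume (S' \ (⋂ m, A m)) := by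
        rw [← measure_inter_add_diff (μ := volume) S' (MeasurableSet.iInter hAmeas)]
      rw [hU, add_zero] at hsplit
      have : 0 < volume (S' ∩ ⋂ m, A m) := lt_of_lt_of_le hS'pos hsplit
      exact hinf this
    set m₀ := Nat.find hexm with hm₀def
    have hm₀ : volume (S' \ A m₀) ≠ 0 := Nat.find_spec hexm
    set U : Set ℝ := ⋃ (k : ℕ) (_ : k < m₀), (S' \ A k) with hUdef
    have hUnull : volume U = 0 := by
      refine measure_iUnion_null fun k => measure_iUnion_null fun hk => ?_
      have := Nat.find_min hexm hk
      simpa using this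
    set F : Set ℝ := (S' \ A m₀) \ U with hFdef
    have hFvol : volume F = volume (S' \ A m₀) := measure_diff_null hUnull
    have hFpos : volume F ≠ 0 := by rw [hFvol]; exact hm₀
    have hFmeas : MeasurableSet F := by
      apply MeasurableSet.diff (hS'meas.diff (hAmeas m₀))
      exact MeasurableSet.iUnion fun k => MeasurableSet.iUnion fun _ =>
        hS'meas.diff (hAmeas k)
    have hFsubS' : F ⊆ S' := fun t ht => ht.1.1
    -- the upper bound on the Lipschitz constant on F
    have hLbound : ∀ t ∈ F, lipWithinAt γ D t ≤ r^m₀ / r := by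
      intro t ht
      obtain ⟨⟨htS', htnA⟩, htnU⟩ := ht
      obtain ⟨hdiff, hml, hnb⟩ := hS'prop t htS'
      have htD : t ∈ D := hSD (hS'sub htS')
      rcases Nat.eq_zero_or_pos m₀ with h0 | hpos
      · have h1 : lipWithinAt γ D t ≤ 1 := aux_lip_le_one hγ htD (hnb (hS'sub htS'))
        have h2 : (1:ℝ) ≤ r^m₀ / r := by
          rw [h0, pow_zero]
          rw [le_div_iff₀ hr0]
          linarith
        linarith
      · have hk : m₀ - 1 < m₀ := Nat.sub_lt hpos one_pos
        have htAk : t ∈ A (m₀ - 1) := by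
          by_contra hna
          exact htnU (mem_iUnion.2 ⟨m₀ - 1, mem_iUnion.2 ⟨hk, ⟨htS', hna⟩⟩⟩)
        have h1 := hml (m₀ - 1) ⟨htD, htAk⟩
        have h2 : r^(m₀ - 1) = r^m₀ / r := by
          rw [eq_div_iff (ne_of_gt hr0), ← pow_succ, Nat.sub_add_cancel hpos]
        linarith [h2 ▸ h1]
    -- choose the coordinate
    have hFsub : F ⊆ ⋃ i, F ∩ {t | r^m₀ < deriv (g i) t} := by
      intro t ht
      have hna : ¬ (∀ i, deriv (g i) t ≤ r^m₀) := ht.1.2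
      push_neg at hna
      obtain ⟨i, hi⟩ := hna
      exact mem_iUnion.2 ⟨i, ht, hi⟩
    have hexi : ∃ i, volume (F ∩ {t | r^m₀ < deriv (g i) t}) ≠ 0 := by
      by_contra hc
      push_neg at hc
      exact hFpos (measure_mono_null hFsub (measure_iUnion_null hc))
    obtain ⟨i, hi⟩ := hexi
    refine ⟨i, F ∩ {t | r^m₀ < deriv (g i) t},
      hFmeas.inter (measurableSet_lt measurable_const (measurable_deriv (g i))),
      fun t ht => hS'sub (hFsubS' ht.1), pos_iff_ne_zero.2 hi, ?_⟩
    intro t ht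
    obtain ⟨htF, hti⟩ := ht
    obtain ⟨hdiff, _, _⟩ := hS'prop t (hFsubS' htF)
    have htD : t ∈ D := hSD (hS'sub (hFsubS' htF))
    refine ⟨deriv (g i) t, ?_, ?_⟩
    · exact ((hdiff i).hasDerivAt.hasDerivWithinAt).congr
        (fun y hy => hgEq i hy) (hgEq i htD)
    · have hLb := hLbound t htF
      have h2 : (1-ε) * lipWithinAt γ D t ≤ r * (r^m₀/r) :=
        mul_le_mul_of_nonneg_left hLb hr0.le
      have h3 : r * (r^m₀/r) = r^m₀ := by field_simp
      have h4 : r^m₀ < deriv (g i) t := hti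
      calc (1-ε) * lipWithinAt γ D t ≤ r * (r^m₀/r) := h2
        _ = r^m₀ := h3
        _ ≤ deriv (g i) t := h4.le
end

section
/- Let $(X,\rho)$ be a metric space, $0 < \beta < 1$, $x, y \in X$, and $\mathcal{B}$ a collection of pairwise disjoint open balls each of diameter at most $\rho(x,y)$; for each $B \in \mathcal{B}$ fix points $x_B, y_B \in \beta B$. Let $(x_1, \dots, x_N)$ be an itinerary from $x$ to $y$ and $S \subseteq \{1, \dots, N-1\}$ the set of indices $i$ with $\{x_i, x_{i+1}\} = \{x_B, y_B\}$ for some $B \in \mathcal{B}$, and suppose consecutive indices in $S$ correspond to different balls of $\mathcal{B}$. If $\sum_{i \in S} \rho(x_i, x_{i+1}) > \beta\, \rho(x,y)$, then $\sum_{i \notin S} \rho(x_i, x_{i+1}) \geq \frac{1-\beta}{2\beta} \sum_{i \in S} \rho(x_i, x_{i+1})$. -/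
open Metric Set Finset

/-- Lemma on itineraries using shortcuts inside well-separated balls: if the total
`ρ`-length of the shortcut segments exceeds `β ρ(x,y)`, then the non-shortcut segments
have total length at least `((1-β)/(2β))` times that of the shortcut segments. -/
theorem stmt_8 {X : Type*} [MetricSpace X] (β : ℝ) (hβ0 : 0 < β) (hβ1 : β < 1)
    (x y : X) {ι : Type*} (ctr : ι → X) (rad : ι → ℝ) (hrad : ∀ i, 0 < rad i)
    (hdisj : ∀ i j, i ≠ j → Disjoint (ball (ctr i) (rad i)) (ball (ctr j) (rad j)))
    (hsep : ∀ i j, i ≠ j → rad i + rad j ≤ dist (ctr i) (ctr j))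
    (hdiam : ∀ i, 2 * rad i ≤ dist x y)
    (xB yB : ι → X)
    (hxB : ∀ i, xB i ∈ ball (ctr i) (β * rad i))
    (hyB : ∀ i, yB i ∈ ball (ctr i) (β * rad i))
    (N : ℕ) (z : ℕ → X) (hz0 : z 0 = x) (hzN : z N = y)
    (S : Finset ℕ) (hSsub : S ⊆ Finset.range N) (ballOf : ℕ → ι)
    (hS : ∀ i ∈ S, ({z i, z (i + 1)} : Set X) = {xB (ballOf i), yB (ballOf i)})
    (hSonly : ∀ i ∈ Finset.range N, i ∉ S →
      ∀ b : ι, ({z i, z (i + 1)} : Set X) ≠ {xB b, yB b})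
    (hconsec : ∀ i ∈ S, ∀ j ∈ S, i < j → (∀ m, i < m → m < j → m ∉ S) →
      ballOf i ≠ ballOf j)
    (hbig : β * dist x y < ∑ i ∈ S, dist (z i) (z (i + 1))) :
    ((1 - β) / (2 * β)) * ∑ i ∈ S, dist (z i) (z (i + 1)) ≤
      ∑ i ∈ Finset.range N \ S, dist (z i) (z (i + 1)) := by
  classical
  set d : ℕ → ℝ := fun i => dist (z i) (z (i + 1)) with hd
  have hd0 : ∀ i, 0 ≤ d i := fun i => dist_nonneg
  set c : ℝ := (1 - β) / (2 * β) with hc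
  have hc0 : 0 ≤ c := div_nonneg (by linarith) (by linarith)
  -- membership of endpoints of shortcut segments in the shrunk balls
  have hmemi : ∀ i ∈ S, z i ∈ ball (ctr (ballOf i)) (β * rad (ballOf i)) := by
    intro i hi
    have h : z i ∈ ({xB (ballOf i), yB (ballOf i)} : Set X) := by
      rw [← hS i hi]; exact Or.inl rfl
    rcases h with h | h
    · rw [h]; exact hxB _
    · rw [h]; exact hyB _
  have hmemi1 : ∀ i ∈ S, z (i + 1) ∈ ball (ctr (ballOf i)) (β * rad (ballOf i)) := by
    intro i hi
    have h : z (i + 1) ∈ ({xB (ballOf i), yB (ballOf i)} : Set X) := by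
      rw [← hS i hi]; exact Or.inr rfl
    rcases h with h | h
    · rw [h]; exact hxB _
    · rw [h]; exact hyB _
  have key1 : ∀ i ∈ S, d i ≤ 2 * β * rad (ballOf i) := by
    intro i hi
    have h1 := mem_ball.mp (hmemi i hi)
    have h2 := mem_ball.mp (hmemi1 i hi)
    have htri := dist_triangle (z i) (ctr (ballOf i)) (z (i + 1))
    rw [dist_comm (ctr (ballOf i))] at htri
    simp only [hd]
    linarith
  have key2 : ∀ i ∈ S, d i ≤ β * dist x y := by
    intro i hi
    refine (key1 i hi).trans ?_
    have := hdiam (ballOf i)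
    nlinarith
  -- the cardinality of S is at least 2
  have hcard : 2 ≤ S.card := by
    by_contra h
    push_neg at h
    interval_cases hcS : S.card
    · rw [Finset.card_eq_zero] at hcS
      rw [hcS, Finset.sum_empty] at hbig
      have := mul_nonneg hβ0.le (dist_nonneg : (0:ℝ) ≤ dist x y)
      linarith
    · obtain ⟨a, ha⟩ := Finset.card_eq_one.mp hcS
      have haS : a ∈ S := ha ▸ Finset.mem_singleton_self a
      rw [ha, Finset.sum_singleton] at hbig
      have := key2 a haS
      simp only [hd] at this
      linarith
  obtain ⟨m, hm⟩ : ∃ m, S.card = m + 2 := ⟨S.card - 2, by omega⟩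
  set e := S.orderEmbOfFin hm with he
  have heS : ∀ t, e t ∈ S := fun t => Finset.orderEmbOfFin_mem S hm t
  have hmono : StrictMono e := (S.orderEmbOfFin hm).strictMono
  have hsurj : ∀ i ∈ S, ∃ t, e t = i := by
    intro i hi
    have hr := Finset.range_orderEmbOfFin S hm
    have : i ∈ Set.range e := by rw [he, hr]; exact hi
    exact this
  -- no element of S strictly between consecutive values of e
  have hmid : ∀ t : Fin (m + 1), ∀ m' : ℕ, e t.castSucc < m' → m' < e t.succ → m' ∉ S := by
    intro t m' h1 h2 hm'
    obtain ⟨s, hs⟩ := hsurj m' hm'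
    rw [← hs] at h1 h2
    have h1' := hmono.lt_iff_lt.mp h1
    have h2' := hmono.lt_iff_lt.mp h2
    simp only [Fin.lt_def, Fin.coe_castSucc, Fin.val_succ] at h1' h2'
    omega
  -- the gap estimate
  have gap : ∀ i ∈ S, ∀ j ∈ S, i < j → (∀ m', i < m' → m' < j → m' ∉ S) →
      c * (d i + d j) ≤ ∑ m' ∈ Finset.Ioo i j, d m' := by
    intro i hi j hj hij hmidij
    have hne : ballOf i ≠ ballOf j := hconsec i hi j hj hij hmidij
    have hz1 := mem_ball.mp (hmemi1 i hi)
    have hzj := mem_ball.mp (hmemi j hj)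
    have tele : dist (z (i + 1)) (z j) ≤ ∑ m' ∈ Finset.Ioo i j, d m' := by
      rw [← Finset.Ico_add_one_left_eq_Ioo, Finset.sum_Ico_eq_sum_range]
      have h := dist_le_range_sum_dist (fun t => z (i + 1 + t)) (j - (i + 1))
      have hij' : i + 1 + (j - (i + 1)) = j := by omega
      simp only [Nat.add_zero] at h
      rw [hij'] at h
      exact h
    have sep := hsep (ballOf i) (ballOf j) hne
    have tri := dist_triangle4 (ctr (ballOf i)) (z (i + 1)) (z j) (ctr (ballOf j))
    have hdi := key1 i hi
    have hdj := key1 j hj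
    have hri := hrad (ballOf i)
    have hrj := hrad (ballOf j)
    have hgeom : c * (d i + d j) ≤ dist (z (i + 1)) (z j) := by
      have hceq : c * (2 * β * rad (ballOf i) + 2 * β * rad (ballOf j))
          = (1 - β) * (rad (ballOf i) + rad (ballOf j)) := by
        rw [hc]; field_simp
      have h1 : c * (d i + d j) ≤ (1 - β) * (rad (ballOf i) + rad (ballOf j)) := by
        rw [← hceq]
        exact mul_le_mul_of_nonneg_left (by linarith) hc0
      refine h1.trans ?_
      have e1 : dist (ctr (ballOf i)) (z (i + 1)) = dist (z (i + 1)) (ctr (ballOf i)) :=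
        dist_comm _ _
      have e2 : dist (z j) (ctr (ballOf j)) = dist (ctr (ballOf j)) (z j) := dist_comm _ _
      nlinarith [sep, tri, hz1, hzj, e1, e2]
    exact hgeom.trans tele
  -- rewrite the sum over S as a sum over Fin (m+2)
  have hsumS : ∑ i ∈ S, d i = ∑ t : Fin (m + 2), d (e t) := by
    refine (Finset.sum_bij (fun t _ => e t) (fun t _ => heS t)
      (fun a _ b _ hab => hmono.injective hab) ?_ (fun t _ => rfl)).symm
    intro i hi
    obtain ⟨t, ht⟩ := hsurj i hi
    exact ⟨t, Finset.mem_univ t, ht⟩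
  -- the intervals are inside range N \ S
  have hsub : ∀ t : Fin (m + 1),
      Finset.Ioo (e t.castSucc) (e t.succ) ⊆ Finset.range N \ S := by
    intro t m' hm'
    rw [Finset.mem_Ioo] at hm'
    refine Finset.mem_sdiff.mpr ⟨?_, hmid t m' hm'.1 hm'.2⟩
    have hN : e t.succ ∈ Finset.range N := hSsub (heS _)
    exact Finset.mem_range.mpr (lt_trans hm'.2 (Finset.mem_range.mp hN))
  -- the intervals are pairwise disjoint
  have hdisjIoo : (↑(Finset.univ : Finset (Fin (m + 1))) : Set (Fin (m + 1))).PairwiseDisjoint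
      (fun t => Finset.Ioo (e t.castSucc) (e t.succ)) := by
    intro a _ b _ hab
    simp only [Function.onFun]
    rw [Finset.disjoint_left]
    intro m' h1 h2
    rw [Finset.mem_Ioo] at h1 h2
    rcases lt_or_gt_of_ne hab with hlt | hlt
    · have : e a.succ ≤ e b.castSucc := by
        apply hmono.monotone
        simp only [Fin.le_def, Fin.val_succ, Fin.coe_castSucc]
        exact Fin.lt_def.mp hlt
      omega
    · have : e b.succ ≤ e a.castSucc := by
        apply hmono.monotone
        simp only [Fin.le_def, Fin.val_succ, Fin.coe_castSucc]
        exact Fin.lt_def.mp hlt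
      omega
  -- combining
  have step1 : c * ∑ i ∈ S, d i ≤
      ∑ t : Fin (m + 1), c * (d (e t.castSucc) + d (e t.succ)) := by
    rw [hsumS, ← Finset.mul_sum]
    refine mul_le_mul_of_nonneg_left ?_ hc0
    rw [Fin.sum_univ_castSucc (f := fun s : Fin (m + 2) => d (e s)),
      Finset.sum_add_distrib]
    have hlast : d (e (Fin.last (m + 1))) ≤ ∑ t : Fin (m + 1), d (e t.succ) := by
      have := Finset.single_le_sum (f := fun t : Fin (m + 1) => d (e t.succ))
        (fun t _ => hd0 _) (Finset.mem_univ (Fin.last m))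
      simpa [Fin.succ_last] using this
    linarith
  have step2 : ∑ t : Fin (m + 1), c * (d (e t.castSucc) + d (e t.succ)) ≤
      ∑ t : Fin (m + 1), ∑ m' ∈ Finset.Ioo (e t.castSucc) (e t.succ), d m' := by
    refine Finset.sum_le_sum fun t _ => ?_
    refine gap _ (heS _) _ (heS _) (hmono (Fin.castSucc_lt_succ (i := t))) (hmid t)
  have step3 : ∑ t : Fin (m + 1), ∑ m' ∈ Finset.Ioo (e t.castSucc) (e t.succ), d m'
      ≤ ∑ m' ∈ Finset.range N \ S, d m' := by
    rw [← Finset.sum_biUnion hdisjIoo]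
    refine Finset.sum_le_sum_of_subset_of_nonneg ?_ (fun _ _ _ => hd0 _)
    exact Finset.biUnion_subset.mpr fun t _ => hsub t
  calc ((1 - β) / (2 * β)) * ∑ i ∈ S, d i = c * ∑ i ∈ S, d i := by rw [hc]
    _ ≤ _ := step1.trans (step2.trans step3)
end

section
/- Let $(X, \rho)$ be a metric space, $c \le \rho$ a symmetric cost function, and $d$ the induced infimal-cost pseudometric. Define an alternating itinerary from $x$ to $y$ as an itinerary $(x_1,\dots,x_N)$ with $N$ even, where $(x_i, x_{i+1})$ is a shortcut (i.e. $c(x_i,x_{i+1}) < \rho(x_i,x_{i+1})$) if and only if $i$ is even, and each shortcut is used at most once. Then $d(x,y)$ equals the infimum of costs over alternating itineraries from $x$ to $y$. -/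
open Metric Set

set_option linter.unusedSectionVars false
set_option linter.unusedVariables false
set_option maxHeartbeats 1000000

attribute [local instance] Classical.propDecidable

/-- Cost of the itinerary `z 0, z 1, …, z N` (with `N` segments). -/
def pathCost {X : Type*} (c : X → X → ℝ) (z : ℕ → X) (N : ℕ) : ℝ :=
  ∑ i ∈ Finset.range N, c (z i) (z (i + 1))

/-- The infimal cost over finite itineraries from `x` to `y`. -/
noncomputable def infCostDist {X : Type*} (c : X → X → ℝ) (x y : X) : ℝ :=
  sInf {r : ℝ | ∃ (N : ℕ) (z : ℕ → X), 1 ≤ N ∧ z 0 = x ∧ z N = y ∧ r = pathCost c z N}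

/-- `z 0, …, z N` is an alternating itinerary: it has an even number of points
(`N = 2m - 1` segments), segment `i` (0-indexed) is a shortcut iff `i` is odd,
and no shortcut is used twice. -/
def IsAlternating {X : Type*} [MetricSpace X] (c : X → X → ℝ) (z : ℕ → X) (N : ℕ) : Prop :=
  (∃ m : ℕ, 1 ≤ m ∧ N = 2 * m - 1) ∧
  (∀ i < N, (c (z i) (z (i + 1)) < dist (z i) (z (i + 1)) ↔ Odd i)) ∧
  (∀ i < N, ∀ j < N, Odd i → Odd j → i ≠ j →
    ({z i, z (i + 1)} : Set X) ≠ {z j, z (j + 1)})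

def Short {X : Type*} [MetricSpace X] (c : X → X → ℝ) (z : ℕ → X) (i : ℕ) : Prop :=
  c (z i) (z (i + 1)) < dist (z i) (z (i + 1))

def Bad {X : Type*} [MetricSpace X] (c : X → X → ℝ) (z : ℕ → X) (N i : ℕ) : Prop :=
  (0 < i → Short c z (i - 1)) ∧ (i < N → Short c z i)

noncomputable def defects {X : Type*} [MetricSpace X] (c : X → X → ℝ) (z : ℕ → X) (N : ℕ) : ℕ :=
  ((Finset.range (N + 1)).filter (fun i => Bad c z N i)).card


section Helpers
variable {X : Type*} [MetricSpace X] (c : X → X → ℝ)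


lemma pathCost_nonneg (hnn : ∀ x y, 0 ≤ c x y) (z : ℕ → X) (N : ℕ) :
    0 ≤ pathCost c z N :=
  Finset.sum_nonneg fun _ _ => hnn _ _

lemma c_self (hnn : ∀ x y, 0 ≤ c x y) (hle : ∀ x y, c x y ≤ dist x y) (a : X) :
    c a a = 0 :=
  le_antisymm (by simpa using hle a a) (hnn a a)

lemma pathCost_split (w : ℕ → X) (i M : ℕ) (hi : i < M) :
    pathCost c w M = (∑ t ∈ Finset.range i, c (w t) (w (t+1))) + c (w i) (w (i+1))
      + ∑ t ∈ Finset.Ico (i+1) M, c (w t) (w (t+1)) := by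
  unfold pathCost
  rw [Finset.range_eq_Ico, ← Finset.sum_Ico_consecutive _ (Nat.zero_le i) (le_of_lt hi),
    Finset.sum_eq_sum_Ico_succ_bot hi, ← Finset.range_eq_Ico]
  ring

lemma excise_cost (hnn : ∀ x y, 0 ≤ c x y) (z : ℕ → X) (N i k : ℕ)
    (hik : i + k ≤ N) (hz : z i = z (i + k)) :
    pathCost c (fun t => if t ≤ i then z t else z (t + k)) (N - k) ≤ pathCost c z N := by
  set w : ℕ → X := fun t => if t ≤ i then z t else z (t + k) with hw
  have hiNk : i ≤ N - k := by omega
  rcases lt_or_eq_of_le hiNk with hlt | heq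
  · -- i < N - k
    rw [pathCost_split c w i (N - k) hlt]
    have h1 : ∑ t ∈ Finset.range i, c (w t) (w (t+1))
        = ∑ t ∈ Finset.range i, c (z t) (z (t+1)) := by
      apply Finset.sum_congr rfl
      intro t ht
      simp only [Finset.mem_range] at ht
      simp only [hw]
      rw [if_pos (show t ≤ i by omega), if_pos (show t + 1 ≤ i by omega)]
    have h2 : c (w i) (w (i+1)) = c (z (i+k)) (z (i+k+1)) := by
      simp only [hw]
      rw [if_pos (le_refl i), if_neg (show ¬ (i + 1 ≤ i) by omega), hz]
      congr 2
      omega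
    have h3 : ∑ t ∈ Finset.Ico (i+1) (N-k), c (w t) (w (t+1))
        = ∑ t ∈ Finset.Ico (i+k+1) N, c (z t) (z (t+1)) := by
      rw [Finset.sum_Ico_eq_sum_range, Finset.sum_Ico_eq_sum_range]
      have : N - k - (i+1) = N - (i+k+1) := by omega
      rw [this]
      apply Finset.sum_congr rfl
      intro u hu
      simp only [Finset.mem_range] at hu
      simp only [hw]
      have e1 : i + 1 + u + k = i + k + 1 + u := by omega
      have e2 : i + 1 + u + 1 + k = i + k + 1 + u + 1 := by omega
      rw [if_neg (show ¬ (i + 1 + u ≤ i) by omega), if_neg (show ¬ (i + 1 + u + 1 ≤ i) by omega), e1, e2]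
    rw [h1, h2, h3]
    have horig : pathCost c z N = (∑ t ∈ Finset.range i, c (z t) (z (t+1)))
        + (∑ t ∈ Finset.Ico i (i+k), c (z t) (z (t+1)))
        + (c (z (i+k)) (z (i+k+1)) + ∑ t ∈ Finset.Ico (i+k+1) N, c (z t) (z (t+1))) := by
      unfold pathCost
      rw [Finset.range_eq_Ico,
        ← Finset.sum_Ico_consecutive (fun t => c (z t) (z (t+1))) (Nat.zero_le (i+k)) hik,
        ← Finset.sum_Ico_consecutive (fun t => c (z t) (z (t+1))) (Nat.zero_le i)
          (show i ≤ i + k by omega),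
        Finset.sum_eq_sum_Ico_succ_bot (show i + k < N by omega)
          (fun t => c (z t) (z (t+1))), ← Finset.range_eq_Ico]
      try ring
    rw [horig]
    have : 0 ≤ ∑ t ∈ Finset.Ico i (i+k), c (z t) (z (t+1)) :=
      Finset.sum_nonneg fun _ _ => hnn _ _
    linarith
  · -- i = N - k : truncation
    have : pathCost c w (N - k) = ∑ t ∈ Finset.range (N-k), c (z t) (z (t+1)) := by
      apply Finset.sum_congr rfl
      intro t ht
      simp only [Finset.mem_range] at ht
      simp only [hw]
      rw [if_pos (show t ≤ i by omega), if_pos (show t + 1 ≤ i by omega)]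
    rw [this]
    apply Finset.sum_le_sum_of_subset_of_nonneg
    · exact Finset.range_subset_range.mpr (by omega)
    · intro t _ _; exact hnn _ _

lemma excise_endpoints (z : ℕ → X) (N i k : ℕ) (hik : i + k ≤ N) (hz : z i = z (i + k)) :
    (fun t => if t ≤ i then z t else z (t + k)) 0 = z 0 ∧
    (fun t => if t ≤ i then z t else z (t + k)) (N - k) = z N := by
  constructor
  · simp
  · by_cases h : N - k ≤ i
    · have : i = N - k := by omega
      simp only [if_pos h]
      rw [← this, hz]
      congr 1; omega
    · simp only [if_neg h]
      congr 1; omega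

lemma merge_cost (hle : ∀ x y, c x y ≤ dist x y) (z : ℕ → X) (N i : ℕ)
    (hi : i + 2 ≤ N)
    (hns1 : dist (z i) (z (i+1)) ≤ c (z i) (z (i+1)))
    (hns2 : dist (z (i+1)) (z (i+2)) ≤ c (z (i+1)) (z (i+2))) :
    pathCost c (fun t => if t ≤ i then z t else z (t + 1)) (N - 1) ≤ pathCost c z N := by
  set w : ℕ → X := fun t => if t ≤ i then z t else z (t + 1) with hw
  rw [pathCost_split c w i (N - 1) (by omega)]
  have h1 : ∑ t ∈ Finset.range i, c (w t) (w (t+1))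
      = ∑ t ∈ Finset.range i, c (z t) (z (t+1)) := by
    apply Finset.sum_congr rfl
    intro t ht
    simp only [Finset.mem_range] at ht
    simp only [hw]
    rw [if_pos (show t ≤ i by omega), if_pos (show t + 1 ≤ i by omega)]
  have h2 : c (w i) (w (i+1)) = c (z i) (z (i+2)) := by
    simp only [hw]
    rw [if_pos (le_refl i), if_neg (show ¬ (i + 1 ≤ i) by omega)]
  have h3 : ∑ t ∈ Finset.Ico (i+1) (N-1), c (w t) (w (t+1))
      = ∑ t ∈ Finset.Ico (i+2) N, c (z t) (z (t+1)) := by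
    rw [Finset.sum_Ico_eq_sum_range, Finset.sum_Ico_eq_sum_range]
    have h : N - 1 - (i+1) = N - (i+2) := by omega
    rw [h]
    apply Finset.sum_congr rfl
    intro u hu
    simp only [Finset.mem_range] at hu
    simp only [hw]
    have e1 : i + 1 + u + 1 = i + 2 + u := by omega
    have e2 : i + 1 + u + 1 + 1 = i + 2 + u + 1 := by omega
    rw [if_neg (show ¬ (i + 1 + u ≤ i) by omega),
      if_neg (show ¬ (i + 1 + u + 1 ≤ i) by omega), e1]
  rw [h1, h2, h3]
  have horig : pathCost c z N = (∑ t ∈ Finset.range i, c (z t) (z (t+1)))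
      + (c (z i) (z (i+1)) + c (z (i+1)) (z (i+2)))
      + ∑ t ∈ Finset.Ico (i+2) N, c (z t) (z (t+1)) := by
    unfold pathCost
    rw [Finset.range_eq_Ico,
      ← Finset.sum_Ico_consecutive (fun t => c (z t) (z (t+1))) (Nat.zero_le (i+2)) hi,
      ← Finset.sum_Ico_consecutive (fun t => c (z t) (z (t+1))) (Nat.zero_le i)
        (show i ≤ i + 2 by omega), ← Finset.range_eq_Ico]
    have : ∑ t ∈ Finset.Ico i (i+2), c (z t) (z (t+1))
        = c (z i) (z (i+1)) + c (z (i+1)) (z (i+2)) := by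
      rw [Finset.sum_Ico_eq_sum_range]
      have : i + 2 - i = 2 := by omega
      rw [this, Finset.sum_range_succ, Finset.sum_range_succ, Finset.sum_range_zero]
      have e1 : i + 0 = i := by omega
      have e2 : i + 0 + 1 = i + 1 := by omega
      rw [e1, e2]
      ring
    rw [this]
  rw [horig]
  have hmerge : c (z i) (z (i+2)) ≤ c (z i) (z (i+1)) + c (z (i+1)) (z (i+2)) :=
    calc c (z i) (z (i+2)) ≤ dist (z i) (z (i+2)) := hle _ _
      _ ≤ dist (z i) (z (i+1)) + dist (z (i+1)) (z (i+2)) := dist_triangle _ _ _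
      _ ≤ c (z i) (z (i+1)) + c (z (i+1)) (z (i+2)) := add_le_add hns1 hns2
  linarith

lemma insert_cost (hnn : ∀ x y, 0 ≤ c x y) (hle : ∀ x y, c x y ≤ dist x y)
    (z : ℕ → X) (N i : ℕ) (hi : i ≤ N) :
    pathCost c (fun t => if t ≤ i then z t else z (t - 1)) (N + 1) = pathCost c z N := by
  set w : ℕ → X := fun t => if t ≤ i then z t else z (t - 1) with hw
  rw [pathCost_split c w i (N + 1) (by omega)]
  have h1 : ∑ t ∈ Finset.range i, c (w t) (w (t+1))
      = ∑ t ∈ Finset.range i, c (z t) (z (t+1)) := by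
    apply Finset.sum_congr rfl
    intro t ht
    simp only [Finset.mem_range] at ht
    simp only [hw]
    rw [if_pos (show t ≤ i by omega), if_pos (show t + 1 ≤ i by omega)]
  have h2 : c (w i) (w (i+1)) = 0 := by
    simp only [hw]
    rw [if_pos (le_refl i), if_neg (show ¬ (i + 1 ≤ i) by omega)]
    have : i + 1 - 1 = i := by omega
    rw [this]
    exact c_self c hnn hle _
  have h3 : ∑ t ∈ Finset.Ico (i+1) (N+1), c (w t) (w (t+1))
      = ∑ t ∈ Finset.Ico i N, c (z t) (z (t+1)) := by
    rw [Finset.sum_Ico_eq_sum_range, Finset.sum_Ico_eq_sum_range]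
    have h : N + 1 - (i+1) = N - i := by omega
    rw [h]
    apply Finset.sum_congr rfl
    intro u hu
    simp only [Finset.mem_range] at hu
    simp only [hw]
    have e1 : i + 1 + u - 1 = i + u := by omega
    have e2 : i + 1 + u + 1 - 1 = i + u + 1 := by omega
    rw [if_neg (show ¬ (i + 1 + u ≤ i) by omega),
      if_neg (show ¬ (i + 1 + u + 1 ≤ i) by omega), e1, e2]
  rw [h1, h2, h3]
  unfold pathCost
  rw [Finset.range_eq_Ico, Finset.range_eq_Ico, ← Finset.sum_Ico_consecutive (fun t => c (z t) (z (t+1)))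
    (Nat.zero_le i) hi, ← Finset.range_eq_Ico]
  ring


lemma terminal_alt (hnn : ∀ x y, 0 ≤ c x y) (N : ℕ) (z : ℕ → X) (hN : 1 ≤ N)
    (hNN : ∀ i, i + 2 ≤ N → Short c z i ∨ Short c z (i + 1))
    (hdist : ∀ i, i < N → ∀ j, j < N → i ≠ j → Short c z i → Short c z j →
      ({z i, z (i + 1)} : Set X) ≠ {z j, z (j + 1)})
    (hdef : defects c z N = 0) :
    IsAlternating c z N := by
  have hnobad : ∀ i, i ≤ N → ¬ Bad c z N i := by
    intro i hi hb
    have : i ∈ (Finset.range (N + 1)).filter (fun i => Bad c z N i) := by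
      simp [Finset.mem_filter, Finset.mem_range]
      exact ⟨by omega, hb⟩
    have := Finset.card_pos.mpr ⟨i, this⟩
    unfold defects at hdef
    omega
  have hS0 : ¬ Short c z 0 := by
    intro hs
    exact hnobad 0 (by omega) ⟨fun h => absurd h (by omega), fun _ => hs⟩
  have hiff : ∀ i, i < N → (Short c z i ↔ Odd i) := by
    intro i
    induction i with
    | zero =>
      intro _
      simp only [Nat.odd_iff]
      exact ⟨fun h => absurd h hS0, by omega⟩
    | succ i ih =>
      intro h
      have hIH := ih (by omega)
      by_cases hs : Short c z i
      · have hs1 : ¬ Short c z (i + 1) := by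
          intro hs1
          exact hnobad (i + 1) (by omega)
            ⟨fun _ => by simpa using hs, fun _ => hs1⟩
        have hoi : Odd i := hIH.mp hs
        constructor
        · intro h'; exact absurd h' hs1
        · intro h'
          rw [Nat.odd_iff] at h' hoi
          omega
      · have hs1 : Short c z (i + 1) := by
          rcases hNN i (by omega) with h' | h'
          · exact absurd h' hs
          · exact h'
        have hoi : ¬ Odd i := fun ho => hs (hIH.mpr ho)
        constructor
        · intro _
          rw [Nat.odd_iff] at hoi ⊢
          omega
        · intro _; exact hs1
  have hlast : ¬ Short c z (N - 1) := by
    intro hs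
    exact hnobad N (le_refl N) ⟨fun _ => hs, fun h => absurd h (by omega)⟩
  have hNodd : ¬ Odd (N - 1) := fun ho => hlast ((hiff (N - 1) (by omega)).mpr ho)
  refine ⟨⟨(N + 1) / 2, ?_, ?_⟩, hiff, ?_⟩
  · rw [Nat.odd_iff] at hNodd; omega
  · rw [Nat.odd_iff] at hNodd; omega
  · intro i hi j hj hoi hoj hne
    exact hdist i hi j hj hne ((hiff i hi).mpr hoi) ((hiff j hj).mpr hoj)


lemma key2 (hnn : ∀ x y, 0 ≤ c x y) (hle : ∀ x y, c x y ≤ dist x y) (D : ℕ) :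
    ∀ N (z : ℕ → X), 1 ≤ N →
    (∀ i, i + 2 ≤ N → Short c z i ∨ Short c z (i + 1)) →
    (∀ i, i < N → ∀ j, j < N → i ≠ j → Short c z i → Short c z j →
      ({z i, z (i + 1)} : Set X) ≠ {z j, z (j + 1)}) →
    defects c z N ≤ D →
    ∃ (N' : ℕ) (w : ℕ → X), IsAlternating c w N' ∧ w 0 = z 0 ∧ w N' = z N ∧
      pathCost c w N' ≤ pathCost c z N := by
  induction D with
  | zero =>
    intro N z hN hNN hdist hdef
    exact ⟨N, z, terminal_alt c hnn N z hN hNN hdist (by omega), rfl, rfl, le_refl _⟩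
  | succ D ih =>
    intro N z hN hNN hdist hdef
    by_cases h0 : defects c z N = 0
    · exact ⟨N, z, terminal_alt c hnn N z hN hNN hdist h0, rfl, rfl, le_refl _⟩
    -- pick a bad position i
    obtain ⟨i, hi⟩ : ∃ i, i ∈ (Finset.range (N + 1)).filter (fun i => Bad c z N i) := by
      rcases Finset.eq_empty_or_nonempty ((Finset.range (N + 1)).filter (fun i => Bad c z N i)) with h | h
      · exfalso; unfold defects at h0; rw [h] at h0; simp at h0
      · exact h
    rw [Finset.mem_filter, Finset.mem_range] at hi
    obtain ⟨hiN, hbad⟩ := hi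
    have hiN' : i ≤ N := by omega
    set w : ℕ → X := fun t => if t ≤ i then z t else z (t - 1) with hw
    -- basic value facts
    have hwle : ∀ t, t ≤ i → w t = z t := by
      intro t ht; simp only [hw]; rw [if_pos ht]
    have hwgt : ∀ t, i < t → w t = z (t - 1) := by
      intro t ht; simp only [hw]; rw [if_neg (by omega)]
    -- segment correspondence
    have hseglt : ∀ t, t < i → (Short c w t ↔ Short c z t) := by
      intro t ht
      unfold Short
      rw [hwle t (by omega), hwle (t + 1) (by omega)]
    have hsegi : ¬ Short c w i := by
      unfold Short
      rw [hwle i (le_refl i), hwgt (i + 1) (by omega)]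
      have : i + 1 - 1 = i := by omega
      rw [this]
      simp [le_antisymm (by simpa using hle (z i) (z i)) (hnn _ _)]
    have hseggt : ∀ t, i < t → (Short c w t ↔ Short c z (t - 1)) := by
      intro t ht
      unfold Short
      rw [hwgt t ht, hwgt (t + 1) (by omega)]
      have e1 : t + 1 - 1 = t - 1 + 1 := by omega
      rw [e1]
    have hpairlt : ∀ t, t < i → ({w t, w (t + 1)} : Set X) = {z t, z (t + 1)} := by
      intro t ht
      rw [hwle t (by omega), hwle (t + 1) (by omega)]
    have hpairgt : ∀ t, i < t → ({w t, w (t + 1)} : Set X) = {z (t - 1), z (t - 1 + 1)} := by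
      intro t ht
      rw [hwgt t ht, hwgt (t + 1) (by omega)]
      have e1 : t + 1 - 1 = t - 1 + 1 := by omega
      rw [e1]
    -- no two consecutive non-shortcuts in w
    have hNNw : ∀ t, t + 2 ≤ N + 1 → Short c w t ∨ Short c w (t + 1) := by
      intro t ht
      rcases lt_trichotomy (t + 1) i with h | h | h
      · rcases hNN t (by omega) with h' | h'
        · exact Or.inl ((hseglt t (by omega)).mpr h')
        · exact Or.inr ((hseglt (t + 1) h).mpr h')
      · -- t + 1 = i : segment t = i - 1 of z, which is short by badness
        have h1 : 0 < i := by omega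
        have := hbad.1 h1
        left
        rw [hseglt t (by omega)]
        have : t = i - 1 := by omega
        rw [this]
        exact hbad.1 h1
      · rcases Nat.lt_or_ge i t with h2 | h2
        · -- i < t : both segments shift down
          rcases hNN (t - 1) (by omega) with h' | h'
          · left; rw [hseggt t h2]; exact h'
          · right; rw [hseggt (t + 1) (by omega)]
            have : t + 1 - 1 = t - 1 + 1 := by omega
            rw [this]; exact h'
        · -- t = i : segment t+1 corresponds to z-segment i, short by badness
          have ht2 : t = i := by omega
          right
          rw [hseggt (t + 1) (by omega)]
          have : t + 1 - 1 = i := by omega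
          rw [this]
          exact hbad.2 (by omega)
    -- distinctness of shortcuts in w
    have hdistw : ∀ t, t < N + 1 → ∀ u, u < N + 1 → t ≠ u → Short c w t → Short c w u →
        ({w t, w (t + 1)} : Set X) ≠ {w u, w (u + 1)} := by
      intro t ht u hu htu hst hsu
      have hti : t ≠ i := fun h => hsegi (h ▸ hst)
      have hui : u ≠ i := fun h => hsegi (h ▸ hsu)
      -- map to original indices
      rcases Nat.lt_or_ge t i with h1 | h1
      · rcases Nat.lt_or_ge u i with h2 | h2
        · rw [hpairlt t h1, hpairlt u h2]
          exact hdist t (by omega) u (by omega) htu ((hseglt t h1).mp hst) ((hseglt u h2).mp hsu)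
        · have h2' : i < u := by omega
          rw [hpairlt t h1, hpairgt u h2']
          exact hdist t (by omega) (u - 1) (by omega) (by omega)
            ((hseglt t h1).mp hst) ((hseggt u h2').mp hsu)
      · have h1' : i < t := by omega
        rcases Nat.lt_or_ge u i with h2 | h2
        · rw [hpairgt t h1', hpairlt u h2]
          exact hdist (t - 1) (by omega) u (by omega) (by omega)
            ((hseggt t h1').mp hst) ((hseglt u h2).mp hsu)
        · have h2' : i < u := by omega
          rw [hpairgt t h1', hpairgt u h2']
          exact hdist (t - 1) (by omega) (u - 1) (by omega) (by omega)
            ((hseggt t h1').mp hst) ((hseggt u h2').mp hsu)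
    -- defects decrease
    have hdefw : defects c w (N + 1) ≤ D := by
      have hbadwi : ¬ Bad c w (N + 1) i := by
        intro hb
        exact hsegi (hb.2 (by omega))
      have hbadwi1 : ¬ Bad c w (N + 1) (i + 1) := by
        intro hb
        have := hb.1 (by omega)
        simp only [Nat.add_sub_cancel] at this
        exact hsegi this
      have hiBadZ : i ∈ (Finset.range (N + 1)).filter (fun j => Bad c z N j) := by
        rw [Finset.mem_filter, Finset.mem_range]
        exact ⟨by omega, hbad⟩
      have hmap : ∀ j ∈ (Finset.range (N + 2)).filter (fun j => Bad c w (N + 1) j),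
          (if j ≤ i then j else j - 1) ∈
            ((Finset.range (N + 1)).filter (fun j => Bad c z N j)).erase i := by
        intro j hj
        rw [Finset.mem_filter, Finset.mem_range] at hj
        obtain ⟨hjr, hbj⟩ := hj
        have hji : j ≠ i := fun h => hbadwi (h ▸ hbj)
        have hji1 : j ≠ i + 1 := fun h => hbadwi1 (h ▸ hbj)
        rw [Finset.mem_erase, Finset.mem_filter, Finset.mem_range]
        rcases Nat.lt_or_ge j i with h1 | h1
        · rw [if_pos (by omega)]
          refine ⟨by omega, by omega, ?_, ?_⟩
          · intro hj0
            exact (hseglt (j - 1) (by omega)).mp (hbj.1 hj0)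
          · intro hjN
            exact (hseglt j h1).mp (hbj.2 (by omega))
        · have h1' : i + 1 < j := by omega
          rw [if_neg (by omega)]
          refine ⟨by omega, by omega, ?_, ?_⟩
          · intro hj0
            have := hbj.1 (by omega)
            have e : j - 1 - 1 = j - 2 := by omega
            rw [e]
            have := (hseggt (j - 1) (by omega)).mp this
            have e2 : j - 1 - 1 = j - 2 := by omega
            rwa [e2] at this
          · intro hjN
            exact (hseggt j (by omega)).mp (hbj.2 (by omega))
      have hinj : Set.InjOn (fun j => if j ≤ i then j else j - 1)
          ((Finset.range (N + 2)).filter (fun j => Bad c w (N + 1) j)) := by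
        intro a ha b hb hab
        rw [Finset.coe_filter, Set.mem_setOf_eq] at ha hb
        have hai : a ≠ i := fun h => hbadwi (h ▸ ha.2)
        have hai1 : a ≠ i + 1 := fun h => hbadwi1 (h ▸ ha.2)
        have hbi : b ≠ i := fun h => hbadwi (h ▸ hb.2)
        have hbi1 : b ≠ i + 1 := fun h => hbadwi1 (h ▸ hb.2)
        simp only at hab
        by_cases h1 : a ≤ i <;> by_cases h2 : b ≤ i <;>
          simp only [h1, h2, if_true, if_false, if_pos, if_neg] at hab <;> omega
      have hcard := Finset.card_le_card_of_injOn _ hmap hinj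
      rw [Finset.card_erase_of_mem hiBadZ] at hcard
      have hpos : 1 ≤ ((Finset.range (N + 1)).filter (fun j => Bad c z N j)).card :=
        Finset.card_pos.mpr ⟨i, hiBadZ⟩
      have e2 : N + 1 + 1 = N + 2 := by omega
      unfold defects at hdef ⊢
      rw [e2]
      omega
    -- apply IH
    obtain ⟨N', w', halt, h0', hN', hc'⟩ := ih (N + 1) w (by omega) hNNw hdistw hdefw
    refine ⟨N', w', halt, ?_, ?_, ?_⟩
    · rw [h0', hwle 0 (by omega)]
    · rw [hN', hwgt (N + 1) (by omega)]
      congr 1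
    · calc pathCost c w' N' ≤ pathCost c w (N + 1) := hc'
        _ = pathCost c z N := by rw [hw]; exact insert_cost c hnn hle z N i hiN'



lemma trivial_alt (hnn : ∀ x y, 0 ≤ c x y) (hle : ∀ x y, c x y ≤ dist x y) (a : X) :
    IsAlternating c (fun _ => a) 1 := by
  refine ⟨⟨1, le_refl 1, by omega⟩, ?_, ?_⟩
  · intro i hi
    have hi0 : i = 0 := by omega
    subst hi0
    have hc : c a a = 0 := c_self c hnn hle a
    constructor
    · intro h
      exfalso
      rw [hc, dist_self] at h
      exact absurd h (lt_irrefl 0)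
    · intro h
      exact absurd h (by simp [Nat.odd_iff])
  · intro i hi j hj _ _ hne
    omega

lemma pathCost_const (hnn : ∀ x y, 0 ≤ c x y) (hle : ∀ x y, c x y ≤ dist x y) (a : X) :
    pathCost c (fun _ => a) 1 = 0 := by
  simp [pathCost, c_self c hnn hle]

lemma key (hnn : ∀ x y, 0 ≤ c x y) (hle : ∀ x y, c x y ≤ dist x y) :
    ∀ N (z : ℕ → X), 1 ≤ N → ∃ (N' : ℕ) (w : ℕ → X), IsAlternating c w N' ∧
      w 0 = z 0 ∧ w N' = z N ∧ pathCost c w N' ≤ pathCost c z N := by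
  intro N
  induction N using Nat.strong_induction_on with
  | _ N ih =>
  intro z hN
  by_cases hrep : ∃ i j, i < j ∧ j < N ∧ Short c z i ∧ Short c z j ∧
      ({z i, z (i + 1)} : Set X) = {z j, z (j + 1)}
  · -- excise a repeated shortcut
    obtain ⟨i, j, hij, hjN, hsi, hsj, hpair⟩ := hrep
    rw [Set.pair_eq_pair_iff] at hpair
    obtain ⟨k, hk1, hik, hzk⟩ : ∃ k, 1 ≤ k ∧ i + k ≤ N ∧ z i = z (i + k) := by
      rcases hpair with ⟨h1, h2⟩ | ⟨h1, h2⟩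
      · exact ⟨j - i, by omega, by omega,
          by rw [show i + (j - i) = j by omega]; exact h1⟩
      · exact ⟨j + 1 - i, by omega, by omega,
          by rw [show i + (j + 1 - i) = j + 1 by omega]; exact h1⟩
    have hcost := excise_cost c hnn z N i k hik hzk
    obtain ⟨he0, heN⟩ := excise_endpoints z N i k hik hzk
    by_cases hz1 : 1 ≤ N - k
    · obtain ⟨N', w', halt, h0', hN', hc'⟩ := ih (N - k) (by omega) (fun t => if t ≤ i then z t else z (t + k)) hz1
      exact ⟨N', w', halt, h0'.trans he0, hN'.trans heN, le_trans hc' hcost⟩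
    · have hNk0 : N - k = 0 := by omega
      have hz0N : z 0 = z N := by
        calc z 0 = (fun t => if t ≤ i then z t else z (t + k)) 0 := he0.symm
          _ = (fun t => if t ≤ i then z t else z (t + k)) (N - k) := by rw [hNk0]
          _ = z N := heN
      refine ⟨1, fun _ => z 0, trivial_alt c hnn hle (z 0), rfl, hz0N, ?_⟩
      rw [pathCost_const c hnn hle]
      exact pathCost_nonneg c hnn z N
  by_cases hmerge : ∃ i, i + 2 ≤ N ∧ ¬ Short c z i ∧ ¬ Short c z (i + 1)
  · -- merge two consecutive non-shortcuts
    obtain ⟨i, hi2, hs1, hs2⟩ := hmerge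
    unfold Short at hs1 hs2
    have hcost := merge_cost c hle z N i hi2 (not_lt.mp hs1) (not_lt.mp hs2)
    have he0 : (fun t => if t ≤ i then z t else z (t + 1)) 0 = z 0 := by
      simp only
      rw [if_pos (Nat.zero_le i)]
    have heN : (fun t => if t ≤ i then z t else z (t + 1)) (N - 1) = z N := by
      simp only
      rw [if_neg (show ¬ (N - 1 ≤ i) by omega)]
      congr 1
      omega
    obtain ⟨N', w', halt, h0', hN', hc'⟩ := ih (N - 1) (by omega) (fun t => if t ≤ i then z t else z (t + 1)) (show 1 ≤ N - 1 by omega)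
    exact ⟨N', w', halt, h0'.trans he0, hN'.trans heN, le_trans hc' hcost⟩
  · -- terminal: pad with trivial segments
    apply key2 c hnn hle (defects c z N) N z hN
    · intro i hi
      by_contra h
      push_neg at h
      exact hmerge ⟨i, hi, h.1, h.2⟩
    · intro i hi j hj hne hsi hsj hpair
      rcases Nat.lt_or_ge i j with h | h
      · exact hrep ⟨i, j, h, hj, hsi, hsj, hpair⟩
      · have h' : j < i := by omega
        exact hrep ⟨j, i, h', hi, hsj, hsi, hpair.symm⟩
    · exact le_refl _

end Helpers

/-- The infimal-cost pseudometric equals the infimum of costs over alternating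
itineraries. -/
theorem stmt_10 {X : Type*} [MetricSpace X] (c : X → X → ℝ)
    (hsym : ∀ x y, c x y = c y x) (hnn : ∀ x y, 0 ≤ c x y)
    (hle : ∀ x y, c x y ≤ dist x y) (x y : X) :
    infCostDist c x y =
      sInf {r : ℝ | ∃ (N : ℕ) (z : ℕ → X),
        IsAlternating c z N ∧ z 0 = x ∧ z N = y ∧ r = pathCost c z N} := by
  set A : Set ℝ := {r : ℝ | ∃ (N : ℕ) (z : ℕ → X),
    1 ≤ N ∧ z 0 = x ∧ z N = y ∧ r = pathCost c z N} with hA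
  set B : Set ℝ := {r : ℝ | ∃ (N : ℕ) (z : ℕ → X),
    IsAlternating c z N ∧ z 0 = x ∧ z N = y ∧ r = pathCost c z N} with hB
  have hBsubA : B ⊆ A := by
    rintro r ⟨N, z, halt, h0, hN, hr⟩
    obtain ⟨⟨m, hm1, hm2⟩, _, _⟩ := halt
    exact ⟨N, z, by omega, h0, hN, hr⟩
  have hBddA : BddBelow A := by
    refine ⟨0, ?_⟩
    rintro r ⟨N, z, _, _, _, hr⟩
    rw [hr]
    exact pathCost_nonneg c hnn z N
  have hBddB : BddBelow B := by
    refine ⟨0, ?_⟩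
    rintro r ⟨N, z, _, _, _, hr⟩
    rw [hr]
    exact pathCost_nonneg c hnn z N
  have hz0 : ∃ z : ℕ → X, z 0 = x ∧ z 1 = y := by
    refine ⟨fun t => if t = 0 then x else y, ?_, ?_⟩ <;> simp
  obtain ⟨z₀, hz01, hz02⟩ := hz0
  have hAne : A.Nonempty := ⟨pathCost c z₀ 1, 1, z₀, le_refl 1, hz01, hz02, rfl⟩
  obtain ⟨N₀, w₀, halt₀, h00, h01, _⟩ := key c hnn hle 1 z₀ (le_refl 1)
  have hBne : B.Nonempty :=
    ⟨pathCost c w₀ N₀, N₀, w₀, halt₀, by rw [h00, hz01], by rw [h01, hz02], rfl⟩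
  have le1 : sInf A ≤ sInf B := csInf_le_csInf hBddA hBne hBsubA
  have le2 : sInf B ≤ sInf A := by
    apply le_csInf hAne
    rintro r ⟨N, z, hN, h0, hNz, hr⟩
    obtain ⟨N', w, halt, h0', hN', hc⟩ := key c hnn hle N z hN
    have hmem : pathCost c w N' ∈ B :=
      ⟨N', w, halt, by rw [h0', h0], by rw [hN', hNz], rfl⟩
    calc sInf B ≤ pathCost c w N' := csInf_le hBddB hmem
      _ ≤ pathCost c z N := hc
      _ = r := hr.symm
  have : sInf A = sInf B := le_antisymm le1 le2
  unfold infCostDist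
  rw [← hA]
  exact this
end

section
/- Let $E$ be a metric space with $0 < \mathcal{H}^p(E) < \infty$ that is $p$-rectifiable, and let $f : F \to Y$ be a Lipschitz map from a subset $F \subseteq E$ to a metric space $Y$ with $\mathcal{H}^p(f(F)) > 0$. Assume every Lipschitz map from a Borel subset of $\mathbb{R}^p$ to a metric space admits a biLipschitz decomposition (decomposition into a null-image piece and countably many biLipschitz pieces). Then there exists a subset $A \subseteq F$ with $\mathcal{H}^p(A) > 0$ such that $f|_A$ is biLipschitz. -/
open MeasureTheory Metric Set
open scoped NNReal ENNReal

private lemma stmt_11_pick {α : Type*} [MeasurableSpace α] (μ : Measure α) {ι : Type*}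
    [Countable ι] {s z : Set α} {t : ι → Set α} (hs : 0 < μ s) (hz : μ z = 0)
    (hcov : s ⊆ z ∪ ⋃ i, t i) : ∃ i, 0 < μ (t i) := by
  by_contra hcon
  push_neg at hcon
  have h0 : μ (⋃ i, t i) = 0 :=
    measure_iUnion_null fun i => le_antisymm (hcon i) zero_le
  exact absurd (measure_mono_null hcov (measure_union_null hz h0)) hs.ne'

/-- If `E` is `p`-rectifiable with `0 < H^p(E) < ∞`, Lipschitz maps on Borel subsets of
`ℝ^p` always admit biLipschitz decompositions, and `f : F → Y` is Lipschitz on `F ⊆ E`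
with `H^p(f(F)) > 0`, then `f` is biLipschitz on some subset `A ⊆ F` of positive
`H^p`-measure. -/
theorem stmt_11 {E Y : Type} [MetricSpace E] [MeasurableSpace E] [BorelSpace E]
    [MetricSpace Y] [MeasurableSpace Y] [BorelSpace Y]
    (p : ℕ) (hp : 0 < p)
    (hE0 : 0 < μH[(p : ℝ)] (univ : Set E)) (hE1 : μH[(p : ℝ)] (univ : Set E) < ⊤)
    (hrect : ∃ (A : ℕ → Set (EuclideanSpace ℝ (Fin p)))
      (g : ℕ → EuclideanSpace ℝ (Fin p) → E),
      (∀ i, MeasurableSet (A i)) ∧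
      (∀ i, ∃ L : ℝ≥0, LipschitzOnWith L (g i) (A i)) ∧
      μH[(p : ℝ)] ((univ : Set E) \ ⋃ i, g i '' A i) = 0)
    (hdecomp : ∀ (Z : Type) [MetricSpace Z] [MeasurableSpace Z] [BorelSpace Z],
      ∀ (A : Set (EuclideanSpace ℝ (Fin p))) (g : EuclideanSpace ℝ (Fin p) → Z),
        MeasurableSet A → (∃ L : ℝ≥0, LipschitzOnWith L g A) →
        ∃ (N : Set (EuclideanSpace ℝ (Fin p))) (Es : ℕ → Set (EuclideanSpace ℝ (Fin p))),
          MeasurableSet N ∧ (∀ j, MeasurableSet (Es j)) ∧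
          A = N ∪ ⋃ j, Es j ∧
          μH[(p : ℝ)] (g '' N) = 0 ∧
          ∀ j, ∃ cc CC : ℝ, 0 < cc ∧ ∀ x ∈ Es j, ∀ y ∈ Es j,
            cc * dist x y ≤ dist (g x) (g y) ∧ dist (g x) (g y) ≤ CC * dist x y)
    (F : Set E) (f : E → Y) (Lf : ℝ≥0) (hf : LipschitzOnWith Lf f F)
    (himg : 0 < μH[(p : ℝ)] (f '' F)) :
    ∃ A : Set E, A ⊆ F ∧ 0 < μH[(p : ℝ)] A ∧
      ∃ cc CC : ℝ, 0 < cc ∧ ∀ x ∈ A, ∀ y ∈ A,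
        cc * dist x y ≤ dist (f x) (f y) ∧ dist (f x) (f y) ≤ CC * dist x y := by
  classical
  have hp0 : (0 : ℝ) ≤ (p : ℝ) := Nat.cast_nonneg p
  obtain ⟨A0, g, hA0meas, hglip, hnull⟩ := hrect
  choose N Es hNmeas hEsmeas hsplit hNnull hbil using
    fun i => hdecomp E (A0 i) (g i) (hA0meas i) (hglip i)
  set Z : Set E := ((univ : Set E) \ ⋃ i, g i '' A0 i) ∪ ⋃ i, g i '' N i with hZdef
  have hZ0 : μH[(p : ℝ)] Z = 0 :=
    measure_union_null hnull (measure_iUnion_null hNnull)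
  have hz_img : μH[(p : ℝ)] (f '' (F ∩ Z)) = 0 := by
    have hle := (hf.mono (inter_subset_left : F ∩ Z ⊆ F)).hausdorffMeasure_image_le hp0
    have h0 : μH[(p : ℝ)] (F ∩ Z) = 0 := measure_mono_null inter_subset_right hZ0
    rw [h0, mul_zero] at hle
    exact le_antisymm hle zero_le
  have hcov : f '' F ⊆ f '' (F ∩ Z) ∪
      ⋃ ij : ℕ × ℕ, f '' (F ∩ g ij.1 '' Es ij.1 ij.2) := by
    rintro _ ⟨x, hxF, rfl⟩
    by_cases hx : x ∈ ⋃ i, g i '' A0 i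
    · simp only [mem_iUnion, mem_image] at hx
      obtain ⟨i, a, ha, rfl⟩ := hx
      rw [hsplit i] at ha
      rcases ha with haN | haE
      · exact Or.inl ⟨g i a, ⟨hxF, Or.inr (mem_iUnion.2 ⟨i, mem_image_of_mem _ haN⟩)⟩, rfl⟩
      · obtain ⟨j, haj⟩ := mem_iUnion.1 haE
        exact Or.inr (mem_iUnion.2 ⟨(i, j), ⟨g i a, ⟨hxF, mem_image_of_mem _ haj⟩, rfl⟩⟩)
    · exact Or.inl ⟨x, ⟨hxF, Or.inl ⟨mem_univ x, hx⟩⟩, rfl⟩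
  obtain ⟨⟨I, J⟩, hIJ⟩ := stmt_11_pick _ himg hz_img hcov
  set G := g I with hGdef
  set S := Es I J with hSdef
  set B : Set (EuclideanSpace ℝ (Fin p)) := S ∩ G ⁻¹' F with hBdef
  obtain ⟨c, C, hc, hbilIJ⟩ := hbil I J
  have key : f '' (F ∩ G '' S) = (fun x => f (G x)) '' B := by
    ext y
    simp only [mem_image, mem_inter_iff, mem_preimage, hBdef]
    constructor
    · rintro ⟨z, ⟨hzF, x, hxS, rfl⟩, rfl⟩; exact ⟨x, ⟨hxS, hzF⟩, rfl⟩
    · rintro ⟨x, ⟨hxS, hxF⟩, rfl⟩; exact ⟨G x, ⟨hxF, x, hxS, rfl⟩, rfl⟩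
  have hposB : 0 < μH[(p : ℝ)] ((fun x => f (G x)) '' B) := key ▸ hIJ
  have hBne : B.Nonempty := by
    rcases B.eq_empty_or_nonempty with hB | hB
    · rw [hB, image_empty] at hposB; simp at hposB
    · exact hB
  obtain ⟨x₀, hx₀⟩ := hBne
  set T : Set Y := (fun x => f (G x)) '' B with hTdef
  have hfG : ∀ x ∈ B, ∀ y ∈ B,
      dist (f (G x)) (f (G y)) ≤ ((Lf : ℝ) * max C 0) * dist x y := by
    intro x hx y hy
    have h1 : dist (f (G x)) (f (G y)) ≤ Lf * dist (G x) (G y) :=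
      hf.dist_le_mul (G x) hx.2 (G y) hy.2
    have h2 : dist (G x) (G y) ≤ max C 0 * dist x y :=
      (hbilIJ x hx.1 y hy.1).2.trans
        (mul_le_mul_of_nonneg_right (le_max_left _ _) dist_nonneg)
    calc dist (f (G x)) (f (G y)) ≤ Lf * dist (G x) (G y) := h1
      _ ≤ Lf * (max C 0 * dist x y) := mul_le_mul_of_nonneg_left h2 Lf.coe_nonneg
      _ = ((Lf : ℝ) * max C 0) * dist x y := by ring
  have hlipB : LipschitzOnWith (Real.toNNReal ((Lf : ℝ) * max C 0))
      (fun x => f (G x)) B := LipschitzOnWith.of_dist_le' hfG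
  have hsepT : TopologicalSpace.IsSeparable T := by
    rw [hTdef, image_eq_range]
    exact TopologicalSpace.isSeparable_range hlipB.continuousOn.restrict
  haveI : TopologicalSpace.SeparableSpace ↥T := hsepT.separableSpace
  haveI : Nonempty ↥T := ⟨⟨f (G x₀), mem_image_of_mem _ hx₀⟩⟩
  have hκ : Isometry (kuratowskiEmbedding ↥T) := kuratowskiEmbedding.isometry ↥T
  set φ : EuclideanSpace ℝ (Fin p) → ↥T := fun x =>
    if hx : x ∈ B then ⟨f (G x), mem_image_of_mem _ hx⟩
    else ⟨f (G x₀), mem_image_of_mem _ hx₀⟩ with hφdef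
  have hφ : ∀ x ∈ B, ((φ x : ↥T) : Y) = f (G x) := by
    intro x hx
    simp only [hφdef, dif_pos hx]
  have hlip₀ : LipschitzOnWith (Real.toNNReal ((Lf : ℝ) * max C 0))
      (fun x => kuratowskiEmbedding ↥T (φ x)) B := by
    apply LipschitzOnWith.of_dist_le'
    intro x hx y hy
    rw [hκ.dist_eq, Subtype.dist_eq, hφ x hx, hφ y hy]
    exact hfG x hx y hy
  obtain ⟨h, hhlip, hheq⟩ := hlip₀.extend_lp_infty
  letI : MeasurableSpace (lp (fun _ : ℕ => ℝ) ∞) := borel _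
  haveI : BorelSpace (lp (fun _ : ℕ => ℝ) ∞) := ⟨rfl⟩
  obtain ⟨N', Es', hN'meas, hEs'meas, hsplit', hnull', hbil'⟩ :=
    hdecomp (lp (fun _ : ℕ => ℝ) ∞) univ h MeasurableSet.univ ⟨_, hhlip.lipschitzOnWith⟩
  have htrans : ∀ s : Set (EuclideanSpace ℝ (Fin p)), s ⊆ B →
      μH[(p : ℝ)] ((fun x => f (G x)) '' s) = μH[(p : ℝ)] (h '' s) := by
    intro s hs
    have h1 : (fun x => f (G x)) '' s = Subtype.val '' (φ '' s) := by
      rw [image_image]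
      exact image_congr fun x hx => (hφ x (hs hx)).symm
    have h2 : h '' s = kuratowskiEmbedding ↥T '' (φ '' s) := by
      rw [image_image]
      exact (image_congr fun x hx => hheq (hs hx)).symm
    rw [h1, h2, isometry_subtype_coe.hausdorffMeasure_image (Or.inl hp0),
      hκ.hausdorffMeasure_image (Or.inl hp0)]
  have hnull2 : μH[(p : ℝ)] ((fun x => f (G x)) '' (B ∩ N')) = 0 := by
    rw [htrans _ inter_subset_left]
    exact measure_mono_null (image_mono inter_subset_right) hnull'
  have hcov2 : (fun x => f (G x)) '' B ⊆ ((fun x => f (G x)) '' (B ∩ N')) ∪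
      ⋃ k, (fun x => f (G x)) '' (B ∩ Es' k) := by
    rintro _ ⟨x, hx, rfl⟩
    have hxu : x ∈ N' ∪ ⋃ k, Es' k := by
      have := mem_univ x
      rw [hsplit'] at this
      exact this
    rcases hxu with h1 | h1
    · exact Or.inl ⟨x, ⟨hx, h1⟩, rfl⟩
    · obtain ⟨k, hk⟩ := mem_iUnion.1 h1
      exact Or.inr (mem_iUnion.2 ⟨k, ⟨x, ⟨hx, hk⟩, rfl⟩⟩)
  obtain ⟨k, hk⟩ := stmt_11_pick _ hposB hnull2 hcov2
  have hAF : G '' (B ∩ Es' k) ⊆ F := by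
    rintro _ ⟨x, hx, rfl⟩
    exact hx.1.2
  refine ⟨G '' (B ∩ Es' k), hAF, ?_, ?_⟩
  · rw [pos_iff_ne_zero]
    intro h0
    have hle := (hf.mono hAF).hausdorffMeasure_image_le hp0
    rw [h0, mul_zero, image_image] at hle
    exact hk.ne' (le_antisymm hle zero_le)
  · obtain ⟨ck, Ck, hck, hbk⟩ := hbil' k
    have hm : (0 : ℝ) < max C 1 := lt_of_lt_of_le one_pos (le_max_right _ _)
    have hm' : max C 1 ≠ 0 := hm.ne'
    have hc' : c ≠ 0 := hc.ne'
    refine ⟨ck / max C 1, max Ck 0 / c, div_pos hck hm, ?_⟩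
    rintro _ ⟨x, hx, rfl⟩ _ ⟨y, hy, rfl⟩
    have hdfh : dist (f (G x)) (f (G y)) = dist (h x) (h y) := by
      rw [← hheq hx.1, ← hheq hy.1, hκ.dist_eq, Subtype.dist_eq, hφ x hx.1, hφ y hy.1]
    obtain ⟨hlow, hup⟩ := hbk x hx.2 y hy.2
    obtain ⟨hlow2, hup2⟩ := hbilIJ x hx.1.1 y hy.1.1
    constructor
    · rw [hdfh]
      have h1 : dist (G x) (G y) ≤ max C 1 * dist x y :=
        hup2.trans (mul_le_mul_of_nonneg_right (le_max_left _ _) dist_nonneg)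
      calc ck / max C 1 * dist (G x) (G y)
          ≤ ck / max C 1 * (max C 1 * dist x y) :=
            mul_le_mul_of_nonneg_left h1 (div_pos hck hm).le
        _ = ck * dist x y := by field_simp
        _ ≤ dist (h x) (h y) := hlow
    · rw [hdfh]
      calc dist (h x) (h y) ≤ Ck * dist x y := hup
        _ ≤ max Ck 0 * dist x y :=
            mul_le_mul_of_nonneg_right (le_max_left _ _) dist_nonneg
        _ = max Ck 0 / c * (c * dist x y) := by field_simp
        _ ≤ max Ck 0 / c * dist (G x) (G y) :=
            mul_le_mul_of_nonneg_left hlow2 (div_nonneg (le_max_right _ _) hc.le)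
end

section
/- Let $I \subseteq \mathbb{R}$ be a compact interval, $D_0 \subseteq I$ compact with $I$ the smallest interval containing $D_0$, and $\gamma : D_0 \to Y$ a Lipschitz map into a Banach space satisfying, for a linear functional $\xi \in Y^*$ and constants $\alpha > 0$, $b > 0$: $\xi(\gamma(t)) - \xi(\gamma(s)) \geq \alpha b (t - s)$ for all $s < t$ in $D_0$, and $\|\gamma(t)-\gamma(s)\| \le b|t-s|$. Let $\tilde{\gamma} : I \to Y$ be the extension of $\gamma$ that is affine on each connected component of $I \setminus D_0$. Then $\tilde{\gamma}$ is $b$-Lipschitz and satisfies $\xi(\tilde{\gamma}(t)) - \xi(\tilde{\gamma}(s)) \geq \alpha b (t-s) \geq \alpha \|\tilde{\gamma}(t) - \tilde{\gamma}(s)\|$ for all $s < t$ in $I$; in particular, $\tilde{\gamma}$ is biLipschitz. -/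
open Metric Set
open scoped NNReal ENNReal

/-- Piecewise-affine extension: if `γ` on a compact set `D₀` is `b`-Lipschitz and
`ξ ∘ γ` increases at rate at least `αb`, then the extension `γ̃` of `γ` to the smallest
interval `I ⊇ D₀`, affine on each gap, is `b`-Lipschitz and satisfies
`ξ(γ̃(t)) - ξ(γ̃(s)) ≥ αb(t-s) ≥ α‖γ̃(t) - γ̃(s)‖` for `s < t` in `I`; in particular it
is biLipschitz. -/
theorem stmt_15 {Y : Type*} [NormedAddCommGroup Y] [NormedSpace ℝ Y]
    (D0 : Set ℝ) (hD0c : IsCompact D0) (hD0ne : D0.Nonempty)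
    (ξ : Y →L[ℝ] ℝ) (α b : ℝ) (hα : 0 < α) (hb : 0 < b)
    (γ γt : ℝ → Y)
    (hlow : ∀ s ∈ D0, ∀ t ∈ D0, s < t → α * b * (t - s) ≤ ξ (γ t) - ξ (γ s))
    (hlip : ∀ s ∈ D0, ∀ t ∈ D0, ‖γ t - γ s‖ ≤ b * |t - s|)
    (hagree : ∀ t ∈ D0, γt t = γ t)
    (haffine : ∀ c d : ℝ, c ∈ D0 → d ∈ D0 → c < d → Ioo c d ∩ D0 = ∅ →
      ∀ t ∈ Icc c d, γt t = ((d - t) / (d - c)) • γ c + ((t - c) / (d - c)) • γ d) :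
    LipschitzOnWith (Real.toNNReal b) γt (Icc (sInf D0) (sSup D0)) ∧
    ∀ s ∈ Icc (sInf D0) (sSup D0), ∀ t ∈ Icc (sInf D0) (sSup D0), s < t →
      α * b * (t - s) ≤ ξ (γt t) - ξ (γt s) ∧
      α * ‖γt t - γt s‖ ≤ ξ (γt t) - ξ (γt s) := by
  have hInfmem : sInf D0 ∈ D0 := hD0c.sInf_mem hD0ne
  have hSupmem : sSup D0 ∈ D0 := hD0c.sSup_mem hD0ne
  -- generic segment estimate
  have hlow' : ∀ c ∈ D0, ∀ d ∈ D0, c ≤ d → α * b * (d - c) ≤ ξ (γ d) - ξ (γ c) := by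
    intro c hc d hd hcd
    rcases eq_or_lt_of_le hcd with rfl | h
    · simp
    · exact hlow c hc d hd h
  have hlip' : ∀ c ∈ D0, ∀ d ∈ D0, c ≤ d → ‖γ d - γ c‖ ≤ b * (d - c) := by
    intro c hc d hd hcd
    have := hlip c hc d hd
    rwa [abs_of_nonneg (by linarith)] at this
  have seg : ∀ c ∈ D0, ∀ d ∈ D0, c < d → ∀ u v : ℝ, c ≤ u → u ≤ v → v ≤ d →
      ∀ x y : Y,
      x = ((d - u) / (d - c)) • γ c + ((u - c) / (d - c)) • γ d →
      y = ((d - v) / (d - c)) • γ c + ((v - c) / (d - c)) • γ d →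
      α * b * (v - u) ≤ ξ y - ξ x ∧ ‖y - x‖ ≤ b * (v - u) := by
    intro c hc d hd hcd u v hcu huv hvd x y hx hy
    have hdc : (0:ℝ) < d - c := by linarith
    have hdiff : y - x = ((v - u) / (d - c)) • (γ d - γ c) := by
      rw [hx, hy]
      match_scalars <;> field_simp <;> ring
    have hcoef : (0:ℝ) ≤ (v - u) / (d - c) := div_nonneg (by linarith) hdc.le
    constructor
    · have hξ : ξ y - ξ x = ((v - u) / (d - c)) * (ξ (γ d) - ξ (γ c)) := by
        rw [← map_sub, hdiff, map_smul]
        simp [map_sub]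
      rw [hξ]
      have h1 := hlow' c hc d hd hcd.le
      have h2 : ((v - u) / (d - c)) * (α * b * (d - c)) ≤
          ((v - u) / (d - c)) * (ξ (γ d) - ξ (γ c)) :=
        mul_le_mul_of_nonneg_left h1 hcoef
      calc α * b * (v - u) = ((v - u) / (d - c)) * (α * b * (d - c)) := by
            field_simp
        _ ≤ _ := h2
    · rw [hdiff, norm_smul, Real.norm_eq_abs, abs_of_nonneg hcoef]
      have h1 := hlip' c hc d hd hcd.le
      calc ((v - u) / (d - c)) * ‖γ d - γ c‖ ≤ ((v - u) / (d - c)) * (b * (d - c)) :=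
            mul_le_mul_of_nonneg_left h1 hcoef
        _ = b * (v - u) := by field_simp
  -- representation of γt on the interval
  have key : ∀ t ∈ Icc (sInf D0) (sSup D0), ∃ c ∈ D0, ∃ d ∈ D0, c ≤ t ∧ t ≤ d ∧
      (∀ x ∈ D0, x ≤ t → x ≤ c) ∧ (∀ x ∈ D0, t ≤ x → d ≤ x) ∧
      ((c = d ∧ γt t = γ c) ∨
        (c < d ∧ γt t = ((d - t) / (d - c)) • γ c + ((t - c) / (d - c)) • γ d)) := by
    intro t ht
    set A : Set ℝ := D0 ∩ Iic t with hA
    set B : Set ℝ := D0 ∩ Ici t with hB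
    have hAne : A.Nonempty := ⟨sInf D0, hInfmem, ht.1⟩
    have hBne : B.Nonempty := ⟨sSup D0, hSupmem, ht.2⟩
    have hAc : IsCompact A := hD0c.inter_right isClosed_Iic
    have hBc : IsCompact B := hD0c.inter_right isClosed_Ici
    have hcmem : sSup A ∈ A := hAc.sSup_mem hAne
    have hdmem : sInf B ∈ B := hBc.sInf_mem hBne
    set c := sSup A
    set d := sInf B
    have hcD : c ∈ D0 := hcmem.1
    have hdD : d ∈ D0 := hdmem.1
    have hct : c ≤ t := hcmem.2
    have htd : t ≤ d := hdmem.2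
    have hmax : ∀ x ∈ D0, x ≤ t → x ≤ c := fun x hx hxt =>
      le_csSup hAc.bddAbove ⟨hx, hxt⟩
    have hmin : ∀ x ∈ D0, t ≤ x → d ≤ x := fun x hx hxt =>
      csInf_le hBc.bddBelow ⟨hx, hxt⟩
    refine ⟨c, hcD, d, hdD, hct, htd, hmax, hmin, ?_⟩
    by_cases htD : t ∈ D0
    · have hc : c = t := le_antisymm hct (hmax t htD le_rfl)
      have hd : d = t := le_antisymm (hmin t htD le_rfl) htd
      exact Or.inl ⟨by rw [hc, hd], by rw [hc]; exact hagree t htD⟩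
    · have hct' : c < t := lt_of_le_of_ne hct (fun h => htD (h ▸ hcD))
      have htd' : t < d := lt_of_le_of_ne htd (fun h => htD (h ▸ hdD))
      have hcd : c < d := hct'.trans htd'
      have hgap : Ioo c d ∩ D0 = ∅ := by
        ext x
        simp only [mem_inter_iff, mem_Ioo, mem_empty_iff_false, iff_false, not_and]
        rintro ⟨hcx, hxd⟩ hxD
        rcases le_or_gt x t with h | h
        · exact absurd (hmax x hxD h) (not_le_of_gt hcx)
        · exact absurd (hmin x hxD h.le) (not_le_of_gt hxd)
      exact Or.inr ⟨hcd, haffine c d hcD hdD hcd hgap t ⟨hct, htd⟩⟩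
  -- main two-point estimate
  have main : ∀ s ∈ Icc (sInf D0) (sSup D0), ∀ t ∈ Icc (sInf D0) (sSup D0), s < t →
      α * b * (t - s) ≤ ξ (γt t) - ξ (γt s) ∧ ‖γt t - γt s‖ ≤ b * (t - s) := by
    intro s hs t ht hst
    obtain ⟨c, hcD, d, hdD, hcs, hsd, hmaxs, hmins, hreps⟩ := key s hs
    obtain ⟨c', hcD', d', hdD', hct, htd, hmaxt, hmint, hrept⟩ := key t ht
    rcases lt_or_ge t d with hcase | hcase
    · -- same gap : c' = c, d' = d, c < d
      have hcd : c < d := by linarith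
      have hc'le : c' ≤ s := by
        by_contra h
        push_neg at h
        exact absurd (hmins c' hcD' h.le) (by linarith)
      have hcc' : c = c' := le_antisymm (hmaxt c hcD (by linarith)) (hmaxs c' hcD' hc'le)
      have hdd' : d = d' := le_antisymm (hmins d' hdD' (by linarith)) (hmint d hdD hcase.le)
      rcases hreps with ⟨h1, _⟩ | ⟨_, hxs⟩
      · exact absurd h1 hcd.ne
      rcases hrept with ⟨h1, _⟩ | ⟨_, hxt⟩
      · exact absurd h1 (by rw [← hcc', ← hdd'] at *; exact hcd.ne)
      rw [← hcc', ← hdd'] at hxt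
      exact seg c hcD d hdD hcd s t hcs hst.le hcase.le _ _ hxs hxt
    · -- different gaps : s ≤ d ≤ c' ≤ t
      have hdc' : d ≤ c' := hmaxt d hdD hcase
      -- estimate on s side : from γt s to γ d
      have Es : α * b * (d - s) ≤ ξ (γ d) - ξ (γt s) ∧ ‖γ d - γt s‖ ≤ b * (d - s) := by
        rcases hreps with ⟨h1, h2⟩ | ⟨hcd, hxs⟩
        · have : s = d := le_antisymm hsd (h1 ▸ hcs)
          rw [h2, h1, this]
          simp
        · have hdform : γ d = ((d - d) / (d - c)) • γ c + ((d - c) / (d - c)) • γ d := by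
            rw [sub_self, div_self (by linarith : d - c ≠ 0)]
            simp
          exact seg c hcD d hdD hcd s d hcs hsd le_rfl _ _ hxs hdform
      -- estimate on t side : from γ c' to γt t
      have Et : α * b * (t - c') ≤ ξ (γt t) - ξ (γ c') ∧ ‖γt t - γ c'‖ ≤ b * (t - c') := by
        rcases hrept with ⟨h1, h2⟩ | ⟨hcd', hxt⟩
        · have : t = c' := le_antisymm (h1 ▸ htd) hct
          rw [h2, this]
          simp
        · have hcform : γ c' = ((d' - c') / (d' - c')) • γ c' + ((c' - c') / (d' - c')) • γ d' := by
            rw [sub_self, div_self (by linarith : d' - c' ≠ 0)]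
            simp
          exact seg c' hcD' d' hdD' hcd' c' t le_rfl hct htd _ _ hcform hxt
      have Em1 : α * b * (c' - d) ≤ ξ (γ c') - ξ (γ d) := hlow' d hdD c' hcD' hdc'
      have Em2 : ‖γ c' - γ d‖ ≤ b * (c' - d) := hlip' d hdD c' hcD' hdc'
      constructor
      · have : ξ (γt t) - ξ (γt s) =
            (ξ (γt t) - ξ (γ c')) + (ξ (γ c') - ξ (γ d)) + (ξ (γ d) - ξ (γt s)) := by ring
        rw [this]
        nlinarith [Es.1, Et.1, Em1]
      · calc ‖γt t - γt s‖ = ‖(γt t - γ c') + (γ c' - γ d) + (γ d - γt s)‖ := by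
              congr 1; abel
          _ ≤ ‖γt t - γ c'‖ + ‖γ c' - γ d‖ + ‖γ d - γt s‖ :=
              (norm_add_le _ _).trans (by gcongr; exact norm_add_le _ _)
          _ ≤ b * (t - c') + b * (c' - d) + b * (d - s) :=
              add_le_add (add_le_add Et.2 Em2) Es.2
          _ = b * (t - s) := by ring
  constructor
  · rw [lipschitzOnWith_iff_dist_le_mul]
    intro x hx y hy
    rw [Real.coe_toNNReal b hb.le, dist_eq_norm, Real.dist_eq]
    rcases lt_trichotomy x y with h | h | h
    · have := (main x hx y hy h).2
      rw [← norm_neg, neg_sub, abs_of_neg (by linarith : x - y < 0)]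
      linarith
    · simp [h]
    · have := (main y hy x hx h).2
      rw [abs_of_pos (by linarith : 0 < x - y)]
      linarith
  · intro s hs t ht hst
    obtain ⟨h1, h2⟩ := main s hs t ht hst
    refine ⟨h1, ?_⟩
    calc α * ‖γt t - γt s‖ ≤ α * (b * (t - s)) := by gcongr
      _ = α * b * (t - s) := by ring
      _ ≤ _ := h1
end
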